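/- arXiv:1405.7064 — 4 statements merged into one kernel-verified Lean document; each statement's English description precedes it below -/
import Mathlib

section
/- Let p be a rational prime, let f be a polynomial with coefficients in the p-adic integers ℤ_p, and let x ∈ ℤ_p with f'(x) ≠ 0. Suppose that either ν(f(x)) > 2ν(f'(x)) (where ν denotes the p-adic valuation and this inequality is understood to hold in particular when f(x) = 0), or ν(f(x)) = 2ν(f'(x)) with ν(f'(x)) ≥ 1 and ν(f''(x)/2) ≥ 1. Then there exists y ∈ ℤ_p such that f(y) = 0 and y ≡ x (mod p). -/
open Polynomial Finset

private lemma hensel_dvd {p : ℕ} [Fact p.Prime] (f : Polynomial ℤ_[p]) (a : ℤ_[p])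
    (h : ‖f.eval a‖ < ‖(Polynomial.derivative f).eval a‖ ^ 2) :
    ∃ y : ℤ_[p], f.eval y = 0 ∧ (p : ℤ_[p]) ∣ (y - a) := by
  obtain ⟨z, hz, hdist, -, -⟩ := hensels_lemma h
  exact ⟨z, hz, (PadicInt.norm_lt_one_iff_dvd _).1
    (hdist.trans_le (PadicInt.norm_le_one _))⟩

set_option maxHeartbeats 1000000 in
/-- A non-standard variant of Hensel's lemma. Note that `ν(f''(x)/2) ≥ 1` is expressed
as `2p ∣ f''(x)` in ℤ_p (the value `f''(x)` is always divisible by 2). -/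
theorem hensel_variant (p : ℕ) [Fact p.Prime] (f : Polynomial ℤ_[p]) (x : ℤ_[p])
    (hf' : Polynomial.eval x (Polynomial.derivative f) ≠ 0)
    (h : Polynomial.eval x f = 0 ∨
      2 * (Polynomial.eval x (Polynomial.derivative f)).valuation <
        (Polynomial.eval x f).valuation ∨
      ((Polynomial.eval x f).valuation =
          2 * (Polynomial.eval x (Polynomial.derivative f)).valuation ∧
        1 ≤ (Polynomial.eval x (Polynomial.derivative f)).valuation ∧
        (2 * p : ℤ_[p]) ∣ Polynomial.eval x (Polynomial.derivative (Polynomial.derivative f)))) :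
    ∃ y : ℤ_[p], Polynomial.eval y f = 0 ∧ (p : ℤ_[p]) ∣ (y - x) := by
  have hp1 : (1:ℝ) < p := by exact_mod_cast (Fact.out : p.Prime).one_lt
  have hp0 : (0:ℝ) < p := lt_trans one_pos hp1
  by_cases hfx : Polynomial.eval x f = 0
  · exact ⟨x, hfx, by simp⟩
  set e := Polynomial.eval x f with he_def
  set d := Polynomial.eval x (Polynomial.derivative f) with hd_def
  rcases h with h | h | ⟨h1, h2, h3⟩
  · exact absurd h hfx
  · -- case 2 : 2 ν(d) < ν(e)
    apply hensel_dvd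
    rw [PadicInt.norm_eq_zpow_neg_valuation hfx, PadicInt.norm_eq_zpow_neg_valuation hf', sq,
      ← zpow_add₀ (ne_of_gt hp0)]
    apply zpow_lt_zpow_right₀ hp1
    omega
  · -- case 3
    set r : ℝ := (p : ℝ)⁻¹ with hr_def
    have hr0 : 0 < r := inv_pos.2 hp0
    have hr1 : r < 1 := inv_lt_one_of_one_lt₀ hp1
    set M : ℕ := d.valuation with hM_def
    have hMv : (M : ℤ) = d.valuation := rfl
    have hM1 : 1 ≤ M := by omega
    have hna : e.valuation = 2 * M := by omega
    -- the unit decompositions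
    set u := PadicInt.unitCoeff hf' with hu_def
    set v := PadicInt.unitCoeff hfx with hv_def
    have hd' : d = (u : ℤ_[p]) * (p : ℤ_[p]) ^ M := PadicInt.unitCoeff_spec hf'
    have he' : e = (v : ℤ_[p]) * (p : ℤ_[p]) ^ (2 * M) := by
      have := PadicInt.unitCoeff_spec hfx
      rwa [hna] at this
    set t : ℤ_[p] := -((v : ℤ_[p]) * ((u⁻¹ : ℤ_[p]ˣ) : ℤ_[p]) * (p : ℤ_[p]) ^ M) with ht_def
    have hkey : ((u⁻¹ : ℤ_[p]ˣ) : ℤ_[p]) * (u : ℤ_[p]) = 1 := u.inv_mul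
    have ht0 : e + t * d = 0 := by
      rw [he', hd', ht_def, two_mul, pow_add]
      linear_combination (-(v : ℤ_[p]) * (p : ℤ_[p]) ^ M * (p : ℤ_[p]) ^ M) * hkey
    have hnt : ‖t‖ = r ^ M := by
      rw [ht_def]
      simp [PadicInt.norm_p, hr_def, inv_pow]
    have hnd : ‖d‖ = r ^ M := by
      rw [PadicInt.norm_eq_zpow_neg_valuation hf']
      simp [hr_def, zpow_neg, zpow_natCast, inv_pow, ← hM_def]
    -- the second Hasse derivative is divisible by p
    have hc2 : (p : ℤ_[p]) ∣ (Polynomial.hasseDeriv 2 f).eval x := by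
      have hfact : Polynomial.derivative (Polynomial.derivative f)
          = 2 * Polynomial.hasseDeriv 2 f := by
        have := congrFun (Polynomial.factorial_smul_hasseDeriv (R := ℤ_[p]) 2) f
        simp only [LinearMap.smul_apply, Function.iterate_succ, Function.iterate_zero,
          Function.comp_apply, id_eq] at this
        rw [← this]
        norm_num [Nat.factorial]
      have heval2 : Polynomial.eval x (Polynomial.derivative (Polynomial.derivative f))
          = 2 * (Polynomial.hasseDeriv 2 f).eval x := by
        rw [hfact]; simp
      have h3' : (2 * (p : ℤ_[p])) ∣ 2 * (Polynomial.hasseDeriv 2 f).eval x :=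
        heval2 ▸ h3
      exact (mul_dvd_mul_iff_left (two_ne_zero (α := ℤ_[p]))).1 h3'
    have hnorm_c2 : ‖(Polynomial.hasseDeriv 2 f).eval x‖ ≤ r := by
      have := (PadicInt.norm_lt_one_iff_dvd _).2 hc2
      have h' := (PadicInt.norm_le_pow_iff_norm_lt_pow_add_one
        ((Polynomial.hasseDeriv 2 f).eval x) (-1)).2 (by simpa using this)
      simpa [hr_def, zpow_neg] using h'
    -- norm of f''(x) ≤ r as well
    have hnorm_f'' : ‖Polynomial.eval x (Polynomial.derivative (Polynomial.derivative f))‖ ≤ r := by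
      have hdvd : (p : ℤ_[p]) ∣ Polynomial.eval x
          (Polynomial.derivative (Polynomial.derivative f)) :=
        dvd_trans (dvd_mul_left _ 2) h3
      have := (PadicInt.norm_lt_one_iff_dvd _).2 hdvd
      have h' := (PadicInt.norm_le_pow_iff_norm_lt_pow_add_one _ (-1)).2 (by simpa using this)
      simpa [hr_def, zpow_neg] using h'
    -- Taylor expansion of f at x+t
    set n := f.natDegree with hn_def
    have hsum : Polynomial.eval (x + t) f
        = ∑ i ∈ Finset.range (2 + (n + 1)), (Polynomial.hasseDeriv i f).eval x * t ^ i := by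
      have h1' : Polynomial.eval (x + t) f = (Polynomial.taylor x f).eval t := by
        rw [Polynomial.taylor_eval, add_comm]
      have hdeg : (Polynomial.taylor x f).natDegree < 2 + (n + 1) := by
        rw [Polynomial.natDegree_taylor]; omega
      rw [h1', Polynomial.eval_eq_sum_range' hdeg]
      exact Finset.sum_congr rfl fun i _ => by rw [Polynomial.taylor_coeff]
    have hsplit := Finset.sum_range_add
      (fun i => (Polynomial.hasseDeriv i f).eval x * t ^ i) 2 (n + 1)
    have hfirst : ∑ i ∈ Finset.range 2, (Polynomial.hasseDeriv i f).eval x * t ^ i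
        = e + t * d := by
      rw [Finset.sum_range_succ, Finset.sum_range_one]
      simp [Polynomial.hasseDeriv_zero, Polynomial.hasseDeriv_one, he_def, hd_def, mul_comm]
    have hval : Polynomial.eval (x + t) f
        = ∑ i ∈ Finset.range (n + 1), (Polynomial.hasseDeriv (2 + i) f).eval x * t ^ (2 + i) := by
      rw [hsum, hsplit, hfirst, ht0, zero_add]
    -- bound the remainder
    have hbound : ‖Polynomial.eval (x + t) f‖ ≤ r ^ (2 * M + 1) := by
      rw [hval]
      apply IsUltrametricDist.norm_sum_le_of_forall_le_of_nonneg (by positivity)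
      intro i _
      rcases Nat.eq_zero_or_pos i with rfl | hi
      · calc ‖(Polynomial.hasseDeriv (2 + 0) f).eval x * t ^ (2 + 0)‖
            = ‖(Polynomial.hasseDeriv 2 f).eval x‖ * ‖t‖ ^ 2 := by
              norm_num [norm_mul, norm_pow]
          _ ≤ r * (r ^ M) ^ 2 := by
              apply mul_le_mul hnorm_c2 _ (by positivity) (le_of_lt hr0)
              rw [hnt]
          _ = r ^ (2 * M + 1) := by ring
      · calc ‖(Polynomial.hasseDeriv (2 + i) f).eval x * t ^ (2 + i)‖
            = ‖(Polynomial.hasseDeriv (2 + i) f).eval x‖ * ‖t‖ ^ (2 + i) := by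
              rw [norm_mul, norm_pow]
          _ ≤ 1 * ‖t‖ ^ (2 + i) := by
              apply mul_le_mul_of_nonneg_right (PadicInt.norm_le_one _) (by positivity)
          _ = (r ^ M) ^ (2 + i) := by rw [one_mul, hnt]
          _ = r ^ (M * (2 + i)) := by rw [← pow_mul]
          _ ≤ r ^ (2 * M + 1) := by
              apply pow_le_pow_of_le_one (le_of_lt hr0) (le_of_lt hr1)
              nlinarith [hM1, hi]
    -- Taylor expansion of f' at x+t
    set g := Polynomial.derivative f with hg_def
    set n' := g.natDegree with hn'_def
    have hsum' : Polynomial.eval (x + t) g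
        = ∑ i ∈ Finset.range (1 + (n' + 1)), (Polynomial.hasseDeriv i g).eval x * t ^ i := by
      have h1' : Polynomial.eval (x + t) g = (Polynomial.taylor x g).eval t := by
        rw [Polynomial.taylor_eval, add_comm]
      have hdeg : (Polynomial.taylor x g).natDegree < 1 + (n' + 1) := by
        rw [Polynomial.natDegree_taylor]; omega
      rw [h1', Polynomial.eval_eq_sum_range' hdeg]
      exact Finset.sum_congr rfl fun i _ => by rw [Polynomial.taylor_coeff]
    have hsplit' := Finset.sum_range_add
      (fun i => (Polynomial.hasseDeriv i g).eval x * t ^ i) 1 (n' + 1)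
    have hfirst' : ∑ i ∈ Finset.range 1, (Polynomial.hasseDeriv i g).eval x * t ^ i = d := by
      rw [Finset.sum_range_one]
      simp [Polynomial.hasseDeriv_zero, hd_def, hg_def]
    have hval' : Polynomial.eval (x + t) g
        = d + ∑ i ∈ Finset.range (n' + 1),
          (Polynomial.hasseDeriv (1 + i) g).eval x * t ^ (1 + i) := by
      rw [hsum', hsplit', hfirst']
    have hrem' : ‖∑ i ∈ Finset.range (n' + 1),
        (Polynomial.hasseDeriv (1 + i) g).eval x * t ^ (1 + i)‖ ≤ r ^ (M + 1) := by
      apply IsUltrametricDist.norm_sum_le_of_forall_le_of_nonneg (by positivity)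
      intro i _
      rcases Nat.eq_zero_or_pos i with rfl | hi
      · calc ‖(Polynomial.hasseDeriv (1 + 0) g).eval x * t ^ (1 + 0)‖
            = ‖(Polynomial.hasseDeriv 1 g).eval x‖ * ‖t‖ ^ 1 := by
              norm_num [norm_mul, norm_pow]
          _ ≤ r * (r ^ M) ^ 1 := by
              apply mul_le_mul _ _ (by positivity) (le_of_lt hr0)
              · rw [Polynomial.hasseDeriv_one]
                exact hnorm_f''
              · rw [hnt]
          _ = r ^ (M + 1) := by ring
      · calc ‖(Polynomial.hasseDeriv (1 + i) g).eval x * t ^ (1 + i)‖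
            = ‖(Polynomial.hasseDeriv (1 + i) g).eval x‖ * ‖t‖ ^ (1 + i) := by
              rw [norm_mul, norm_pow]
          _ ≤ 1 * ‖t‖ ^ (1 + i) := by
              apply mul_le_mul_of_nonneg_right (PadicInt.norm_le_one _) (by positivity)
          _ = (r ^ M) ^ (1 + i) := by rw [one_mul, hnt]
          _ = r ^ (M * (1 + i)) := by rw [← pow_mul]
          _ ≤ r ^ (M + 1) := by
              apply pow_le_pow_of_le_one (le_of_lt hr0) (le_of_lt hr1)
              nlinarith [hM1, hi]
    have hlt : r ^ (M + 1) < r ^ M := pow_lt_pow_right_of_lt_one₀ hr0 hr1 (by omega)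
    have hrem_lt : ‖∑ i ∈ Finset.range (n' + 1),
        (Polynomial.hasseDeriv (1 + i) g).eval x * t ^ (1 + i)‖ < ‖d‖ := by
      rw [hnd]; exact lt_of_le_of_lt hrem' hlt
    have hne : ‖d‖ ≠ ‖∑ i ∈ Finset.range (n' + 1),
        (Polynomial.hasseDeriv (1 + i) g).eval x * t ^ (1 + i)‖ := (ne_of_lt hrem_lt).symm
    have hnorm_deriv : ‖Polynomial.eval (x + t) g‖ = r ^ M := by
      rw [hval', PadicInt.norm_add_eq_max_of_ne hne, hnd]
      exact max_eq_left (le_of_lt (by rw [← hnd]; exact hrem_lt))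
    -- apply Hensel's lemma at x + t
    have hmain : ‖Polynomial.eval (x + t) f‖
        < ‖Polynomial.eval (x + t) (Polynomial.derivative f)‖ ^ 2 := by
      rw [← hg_def, hnorm_deriv, ← pow_mul]
      calc ‖Polynomial.eval (x + t) f‖ ≤ r ^ (2 * M + 1) := hbound
        _ < r ^ (M * 2) := pow_lt_pow_right_of_lt_one₀ hr0 hr1 (by omega)
    obtain ⟨y, hy, hdvd⟩ := hensel_dvd f (x + t) hmain
    refine ⟨y, hy, ?_⟩
    have hpt : (p : ℤ_[p]) ∣ t := by
      rw [← PadicInt.norm_lt_one_iff_dvd, hnt]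
      calc r ^ M ≤ r ^ 1 := pow_le_pow_of_le_one (le_of_lt hr0) (le_of_lt hr1) hM1
        _ < 1 := by rwa [pow_one]
    have : y - x = (y - (x + t)) + t := by ring
    rw [this]
    exact dvd_add hdvd hpt
end

section
/- Let r₃ ≥ 1 and r₂, r₁ ≥ 0 be integers and let N be a natural number. Suppose that for every n > N, every system consisting of r₃ − 1 cubic forms, 3r₃ + r₂ quadratic forms and 6r₃ + 3r₂ + r₁ linear forms over ℚ₃ in n variables has a common nontrivial zero. Then for every n > N, every system consisting of r₃ cubic forms, r₂ quadratic forms and r₁ linear forms over ℚ₃ in n variables has a common nontrivial zero. -/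
set_option linter.unusedSectionVars false
namespace CR
open MvPolynomial Finset

variable {K : Type*} [Field K] [CharZero K] {n : ℕ}

/-! ### Monomials of fixed degree as products -/

lemma monomial_eval_list {d : ℕ} :
    ∀ (m : Fin n →₀ ℕ), m.degree = d → ∀ (c : K), ∃ l : List (Fin n), l.length = d ∧
      ∀ v : Fin n → K, eval v (monomial m c) = c * (l.map v).prod := by
  induction d with
  | zero =>
    intro m hm c
    have h0 : m = 0 := (Finsupp.degree_eq_zero_iff m).mp hm
    exact ⟨[], rfl, fun v => by simp [h0]⟩
  | succ d ih =>
    intro m hm c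
    have hm0 : m ≠ 0 := by
      intro h; rw [h] at hm; simp at hm
    obtain ⟨a, ha⟩ : ∃ a, m a ≠ 0 := by
      by_contra h
      push_neg at h
      exact hm0 (Finsupp.ext fun i => h i)
    have hle : Finsupp.single a 1 ≤ m := Finsupp.single_le_iff.mpr (by omega)
    set m' := m - Finsupp.single a 1 with hm'
    have hsum : m' + Finsupp.single a 1 = m := tsub_add_cancel_of_le hle
    have hdegadd : (m' + Finsupp.single a 1).degree = m'.degree + (Finsupp.single a (1:ℕ)).degree := by
      exact map_add _ _ _
    have hdegsingle : (Finsupp.single a (1:ℕ)).degree = 1 := by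
      exact Finsupp.degree_single a 1
    have hdeg : m'.degree = d := by
      have := hdegadd
      rw [hsum, hm, hdegsingle] at this
      omega
    obtain ⟨l, hl, hev⟩ := ih m' hdeg c
    refine ⟨a :: l, by simp [hl], fun v => ?_⟩
    have hmono : (monomial m c : MvPolynomial (Fin n) K) = monomial m' c * X a := by
      rw [X, monomial_mul, hsum, mul_one]
    rw [hmono, map_mul, hev v, eval_X]
    simp only [List.map_cons, List.prod_cons]
    ring

/-- Induction principle for homogeneous cubics. -/
lemma hom_ind {d : ℕ} (Pr : MvPolynomial (Fin n) K → Prop) (h0 : Pr 0)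
    (hadd : ∀ p q, Pr p → Pr q → Pr (p + q))
    (hmono : ∀ m (c : K), m.degree = d → Pr (monomial m c))
    {P : MvPolynomial (Fin n) K} (hP : P.IsHomogeneous d) : Pr P := by
  rw [← support_sum_monomial_coeff P]
  apply Finset.sum_induction _ _ hadd h0
  intro m hm
  apply hmono
  have := hP (mem_support_iff.mp hm)
  rw [Finsupp.degree_eq_weight_one]
  exact this

/-! ### The symmetric trilinear form of a cubic -/

noncomputable def tri (P : MvPolynomial (Fin n) K) (x y z : Fin n → K) : K :=
  (6 : K)⁻¹ * (eval (x + y + z) P - eval (x + y) P - eval (x + z) P - eval (y + z) P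
    + eval x P + eval y P + eval z P)

lemma tri_poly_add (p q : MvPolynomial (Fin n) K) (x y z : Fin n → K) :
    tri (p + q) x y z = tri p x y z + tri q x y z := by
  simp only [tri, map_add]; ring

lemma tri_poly_zero (x y z : Fin n → K) : tri (0 : MvPolynomial (Fin n) K) x y z = 0 := by
  simp [tri]

lemma tri_symm12 (P : MvPolynomial (Fin n) K) (x y z : Fin n → K) :
    tri P x y z = tri P y x z := by
  unfold tri; rw [add_comm x y]; ring

lemma tri_symm23 (P : MvPolynomial (Fin n) K) (x y z : Fin n → K) :
    tri P x y z = tri P x z y := by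
  unfold tri; rw [add_right_comm x y z]; ring

lemma tri_add_left {P : MvPolynomial (Fin n) K} (hP : P.IsHomogeneous 3) (x x' y z : Fin n → K) :
    tri P (x + x') y z = tri P x y z + tri P x' y z := by
  revert x x' y z
  apply hom_ind (d := 3)
    (Pr := fun P => ∀ x x' y z : Fin n → K, tri P (x + x') y z = tri P x y z + tri P x' y z)
    _ _ _ hP
  · intro x x' y z; simp [tri_poly_zero]
  · intro p q hp hq x x' y z
    rw [tri_poly_add, tri_poly_add, tri_poly_add, hp, hq]; ring
  · intro m c hm x x' y z
    obtain ⟨l, hl, hev⟩ := monomial_eval_list m hm c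
    obtain ⟨i, j, k, rfl⟩ := List.length_eq_three.mp hl
    simp only [List.map_cons, List.map_nil, List.prod_cons, List.prod_nil, mul_one] at hev
    simp only [tri, hev, Pi.add_apply]
    ring

lemma tri_smul_left {P : MvPolynomial (Fin n) K} (hP : P.IsHomogeneous 3) (t : K)
    (x y z : Fin n → K) : tri P (t • x) y z = t * tri P x y z := by
  revert t x y z
  apply hom_ind (d := 3)
    (Pr := fun P => ∀ (t : K) (x y z : Fin n → K), tri P (t • x) y z = t * tri P x y z)
    _ _ _ hP
  · intro t x y z; simp [tri_poly_zero]
  · intro p q hp hq t x y z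
    rw [tri_poly_add, tri_poly_add, hp, hq]; ring
  · intro m c hm t x y z
    obtain ⟨l, hl, hev⟩ := monomial_eval_list m hm c
    obtain ⟨i, j, k, rfl⟩ := List.length_eq_three.mp hl
    simp only [List.map_cons, List.map_nil, List.prod_cons, List.prod_nil, mul_one] at hev
    simp only [tri, hev, Pi.add_apply, Pi.smul_apply, smul_eq_mul]
    ring

lemma tri_diag {P : MvPolynomial (Fin n) K} (hP : P.IsHomogeneous 3) (x : Fin n → K) :
    tri P x x x = eval x P := by
  revert x
  apply hom_ind (d := 3) (Pr := fun P => ∀ x : Fin n → K, tri P x x x = eval x P) _ _ _ hP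
  · intro x; simp [tri_poly_zero]
  · intro p q hp hq x
    rw [tri_poly_add, hp, hq, map_add]
  · intro m c hm x
    obtain ⟨l, hl, hev⟩ := monomial_eval_list m hm c
    obtain ⟨i, j, k, rfl⟩ := List.length_eq_three.mp hl
    simp only [List.map_cons, List.map_nil, List.prod_cons, List.prod_nil, mul_one] at hev
    simp only [tri, hev, Pi.add_apply]
    ring

section TriDerived

variable {P : MvPolynomial (Fin n) K} (hP : P.IsHomogeneous 3)
include hP

lemma tri_add_mid (x y y' z : Fin n → K) :
    tri P x (y + y') z = tri P x y z + tri P x y' z := by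
  rw [tri_symm12, tri_add_left hP, tri_symm12, tri_symm12 P y']

lemma tri_add_right (x y z z' : Fin n → K) :
    tri P x y (z + z') = tri P x y z + tri P x y z' := by
  rw [tri_symm23, tri_add_mid hP, tri_symm23, tri_symm23 P x z']

lemma tri_smul_mid (t : K) (x y z : Fin n → K) : tri P x (t • y) z = t * tri P x y z := by
  rw [tri_symm12, tri_smul_left hP, tri_symm12]

lemma tri_smul_right (t : K) (x y z : Fin n → K) : tri P x y (t • z) = t * tri P x y z := by
  rw [tri_symm23, tri_smul_mid hP, tri_symm23]

lemma tri_zero_left (y z : Fin n → K) : tri P 0 y z = 0 := by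
  have h := tri_smul_left hP 0 0 y z
  simpa using h

lemma tri_zero_mid (x z : Fin n → K) : tri P x 0 z = 0 := by
  rw [tri_symm12]; exact tri_zero_left hP x z

lemma tri_zero_right (x y : Fin n → K) : tri P x y 0 = 0 := by
  rw [tri_symm23]; exact tri_zero_mid hP x y

/-- Pair expansion for cubics. -/
lemma pair_expand (x y : Fin n → K) :
    eval (x + y) P = eval x P + 3 * tri P x x y + 3 * tri P x y y + eval y P := by
  have hL := tri_add_left hP
  have hM := tri_add_mid hP
  have hR := tri_add_right hP
  have h := tri_diag hP (x + y)
  simp only [hL, hM, hR] at h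
  rw [tri_diag hP x, tri_diag hP y] at h
  have e1 : tri P x y x = tri P x x y := by rw [tri_symm23]
  have e2 : tri P y x x = tri P x x y := by rw [tri_symm12, tri_symm23]
  have e3 : tri P y x y = tri P x y y := by rw [tri_symm12]
  have e4 : tri P y y x = tri P x y y := by rw [tri_symm23, tri_symm12]
  rw [e1, e2, e3, e4] at h
  linear_combination -h

end TriDerived

/-! ### Shifted polynomials and homogeneous components -/

noncomputable def shift (pt : Fin n → K) (P : MvPolynomial (Fin n) K) : MvPolynomial (Fin n) K :=
  aeval (fun i => X i + C (pt i)) P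

lemma eval_shift (pt y : Fin n → K) (P : MvPolynomial (Fin n) K) :
    eval y (shift pt P) = eval (fun i => pt i + y i) P := by
  induction P using MvPolynomial.induction_on with
  | C a => simp [shift]
  | add p q hp hq => simp only [shift, map_add] at *; rw [hp, hq]
  | mul_X p i hp => simp only [shift, map_mul] at *; rw [hp]; simp [add_comm]

lemma totalDegree_shift_le (pt : Fin n → K) (P : MvPolynomial (Fin n) K) :
    (shift pt P).totalDegree ≤ P.totalDegree := by
  unfold shift
  conv_lhs => rw [← support_sum_monomial_coeff P]
  rw [map_sum]
  apply totalDegree_finsetSum_le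
  intro m hm
  rw [aeval_monomial]
  refine le_trans (totalDegree_mul _ _) ?_
  have h1 : (algebraMap K (MvPolynomial (Fin n) K) (coeff m P)).totalDegree = 0 :=
    totalDegree_C _
  rw [h1, zero_add]
  rw [Finsupp.prod]
  refine le_trans (totalDegree_finset_prod _ _) ?_
  refine le_trans ?_ (le_totalDegree hm)
  have h2 : ∀ i ∈ m.support, ((X i + C (pt i) : MvPolynomial (Fin n) K) ^ m i).totalDegree ≤ m i := by
    intro i _
    refine le_trans (totalDegree_pow _ _) ?_
    have : (X i + C (pt i) : MvPolynomial (Fin n) K).totalDegree ≤ 1 := by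
      refine le_trans (totalDegree_add _ _) ?_
      simp [totalDegree_X, totalDegree_C]
    calc m i * (X i + C (pt i) : MvPolynomial (Fin n) K).totalDegree ≤ m i * 1 :=
          Nat.mul_le_mul_left _ this
      _ = m i := Nat.mul_one _
  refine le_trans (Finset.sum_le_sum h2) ?_
  rfl

noncomputable def comp (k : ℕ) (pt : Fin n → K) (P : MvPolynomial (Fin n) K) :
    MvPolynomial (Fin n) K := homogeneousComponent k (shift pt P)

lemma comp_isHomog (k : ℕ) (pt : Fin n → K) (P : MvPolynomial (Fin n) K) :
    (comp k pt P).IsHomogeneous k := homogeneousComponent_isHomogeneous k _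

lemma eval_smul_homog {P : MvPolynomial (Fin n) K} {d : ℕ} (hP : P.IsHomogeneous d) (t : K)
    (y : Fin n → K) : eval (fun i => t * y i) P = t ^ d * eval y P := by
  conv_lhs => rw [← support_sum_monomial_coeff P]
  conv_rhs => rw [← support_sum_monomial_coeff P]
  rw [map_sum, map_sum, Finset.mul_sum]
  apply Finset.sum_congr rfl
  intro m hm
  rw [eval_monomial, eval_monomial]
  have hd : m.degree = d := by
    have := hP (mem_support_iff.mp hm)
    rw [Finsupp.degree_eq_weight_one]; exact this
  rw [Finsupp.prod, Finsupp.prod]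
  have h1 : ∀ i ∈ m.support, (t * y i) ^ m i = t ^ m i * (y i) ^ m i := fun i _ => mul_pow _ _ _
  rw [Finset.prod_congr rfl h1, Finset.prod_mul_distrib, Finset.prod_pow_eq_pow_sum]
  have h2 : ∑ i ∈ m.support, m i = d := hd
  rw [h2]; ring

lemma eval_smul_d {P : MvPolynomial (Fin n) K} {d : ℕ} (hP : P.IsHomogeneous d) (t : K)
    (x : Fin n → K) : eval (t • x) P = t ^ d * eval x P := by
  have h : t • x = fun i => t * x i := funext fun i => rfl
  rw [h]; exact eval_smul_homog hP t x

lemma expandD {P : MvPolynomial (Fin n) K} {d : ℕ} (hP : P.IsHomogeneous d) (pt y : Fin n → K)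
    (t : K) :
    eval (fun i => pt i + t * y i) P = ∑ k ∈ Finset.range (d + 1), t ^ k * eval y (comp k pt P) := by
  have h1 : eval (fun i => pt i + t * y i) P = eval (fun i => t * y i) (shift pt P) := by
    rw [eval_shift]
  have htot : (shift pt P).totalDegree ≤ d :=
    le_trans (totalDegree_shift_le pt P) hP.totalDegree_le
  have hdecomp : shift pt P = ∑ k ∈ Finset.range (d + 1), comp k pt P := by
    have hA := sum_homogeneousComponent (shift pt P)
    have hB := Finset.sum_Ico_consecutive (fun k => homogeneousComponent k (shift pt P))
      (Nat.zero_le ((shift pt P).totalDegree + 1)) (show (shift pt P).totalDegree + 1 ≤ d + 1 by omega)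
    have hC : ∑ k ∈ Finset.Ico ((shift pt P).totalDegree + 1) (d + 1),
        homogeneousComponent k (shift pt P) = 0 := by
      apply Finset.sum_eq_zero
      intro k hk
      have hk1 : (shift pt P).totalDegree < k := by
        have := (Finset.mem_Ico.mp hk).1; omega
      exact homogeneousComponent_eq_zero _ _ hk1
    rw [hC, add_zero] at hB
    rw [← Nat.Ico_zero_eq_range] at hA
    rw [hA] at hB
    unfold comp
    rw [← Nat.Ico_zero_eq_range]
    simpa using hB
  rw [h1, hdecomp, map_sum]
  apply Finset.sum_congr rfl
  intro k _
  exact eval_smul_homog (comp_isHomog k pt P) t y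

/-! ### Coefficient matching -/

lemma cubic_match {a0 a1 a2 a3 b0 b1 b2 b3 : K}
    (h : ∀ t : K, a0 + a1 * t + a2 * t ^ 2 + a3 * t ^ 3 = b0 + b1 * t + b2 * t ^ 2 + b3 * t ^ 3) :
    a1 = b1 ∧ a2 = b2 := by
  constructor
  · linear_combination (h 1) - (1/3 : K) * (h (-1)) - (1/6 : K) * (h 2) - (1/2 : K) * (h 0)
  · linear_combination (1/2 : K) * (h 1) + (1/2 : K) * (h (-1)) - (h 0)

lemma quad_match {a0 a1 a2 b0 b1 b2 : K}
    (h : ∀ t : K, a0 + a1 * t + a2 * t ^ 2 = b0 + b1 * t + b2 * t ^ 2) : a1 = b1 := by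
  linear_combination (1/2 : K) * (h 1) - (1/2 : K) * (h (-1))

/-! ### Bridges between components and polar forms -/

lemma tri_expand {P : MvPolynomial (Fin n) K} (hP : P.IsHomogeneous 3) (pt y : Fin n → K)
    (t : K) :
    eval (fun i => pt i + t * y i) P
      = eval pt P + (3 * tri P pt pt y) * t + (3 * tri P pt y y) * t ^ 2 + eval y P * t ^ 3 := by
  have hty : (fun i => pt i + t * y i) = pt + t • y := funext fun i => rfl
  rw [hty]
  have h := (tri_diag hP (pt + t • y)).symm
  simp only [tri_add_left hP, tri_add_mid hP, tri_add_right hP, tri_smul_left hP,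
    tri_smul_mid hP, tri_smul_right hP] at h
  rw [tri_diag hP pt, tri_diag hP y] at h
  have e1 : tri P pt y pt = tri P pt pt y := by rw [tri_symm23]
  have e2 : tri P y pt pt = tri P pt pt y := by rw [tri_symm12, tri_symm23]
  have e3 : tri P y pt y = tri P pt y y := by rw [tri_symm12]
  have e4 : tri P y y pt = tri P pt y y := by rw [tri_symm23, tri_symm12]
  rw [e1, e2, e3, e4] at h
  rw [h]; ring

lemma eval_comp1 {P : MvPolynomial (Fin n) K} (hP : P.IsHomogeneous 3) (pt y : Fin n → K) :
    eval y (comp 1 pt P) = 3 * tri P pt pt y := by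
  have h : ∀ t : K, eval y (comp 0 pt P) + eval y (comp 1 pt P) * t
      + eval y (comp 2 pt P) * t ^ 2 + eval y (comp 3 pt P) * t ^ 3
      = eval pt P + (3 * tri P pt pt y) * t + (3 * tri P pt y y) * t ^ 2 + eval y P * t ^ 3 := by
    intro t
    have h1 := expandD hP pt y t
    have h2 := tri_expand hP pt y t
    rw [Finset.sum_range_succ, Finset.sum_range_succ, Finset.sum_range_succ,
      Finset.sum_range_one] at h1
    rw [h1] at h2
    linear_combination h2
  exact ((cubic_match h).1).symm ▸ (cubic_match h).1

lemma eval_comp2 {P : MvPolynomial (Fin n) K} (hP : P.IsHomogeneous 3) (pt y : Fin n → K) :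
    eval y (comp 2 pt P) = 3 * tri P pt y y := by
  have h : ∀ t : K, eval y (comp 0 pt P) + eval y (comp 1 pt P) * t
      + eval y (comp 2 pt P) * t ^ 2 + eval y (comp 3 pt P) * t ^ 3
      = eval pt P + (3 * tri P pt pt y) * t + (3 * tri P pt y y) * t ^ 2 + eval y P * t ^ 3 := by
    intro t
    have h1 := expandD hP pt y t
    have h2 := tri_expand hP pt y t
    rw [Finset.sum_range_succ, Finset.sum_range_succ, Finset.sum_range_succ,
      Finset.sum_range_one] at h1
    rw [h1] at h2
    linear_combination h2
  exact (cubic_match h).2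

/-! ### Bilinear form of a quadratic -/

noncomputable def bil (Q : MvPolynomial (Fin n) K) (x y : Fin n → K) : K :=
  (2 : K)⁻¹ * (eval (x + y) Q - eval x Q - eval y Q)

lemma bil_poly_add (p q : MvPolynomial (Fin n) K) (x y : Fin n → K) :
    bil (p + q) x y = bil p x y + bil q x y := by
  simp only [bil, map_add]; ring

lemma bil_poly_zero (x y : Fin n → K) : bil (0 : MvPolynomial (Fin n) K) x y = 0 := by
  simp [bil]

lemma bil_symm (Q : MvPolynomial (Fin n) K) (x y : Fin n → K) : bil Q x y = bil Q y x := by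
  unfold bil; rw [add_comm x y]; ring

lemma bil_add_left {Q : MvPolynomial (Fin n) K} (hQ : Q.IsHomogeneous 2) (x x' y : Fin n → K) :
    bil Q (x + x') y = bil Q x y + bil Q x' y := by
  revert x x' y
  apply hom_ind (d := 2)
    (Pr := fun Q => ∀ x x' y : Fin n → K, bil Q (x + x') y = bil Q x y + bil Q x' y) _ _ _ hQ
  · intro x x' y; simp [bil_poly_zero]
  · intro p q hp hq x x' y
    rw [bil_poly_add, bil_poly_add, bil_poly_add, hp, hq]; ring
  · intro m c hm x x' y
    obtain ⟨l, hl, hev⟩ := monomial_eval_list m hm c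
    obtain ⟨i, j, rfl⟩ := List.length_eq_two.mp hl
    simp only [List.map_cons, List.map_nil, List.prod_cons, List.prod_nil, mul_one] at hev
    simp only [bil, hev, Pi.add_apply]
    ring

lemma bil_smul_left {Q : MvPolynomial (Fin n) K} (hQ : Q.IsHomogeneous 2) (t : K)
    (x y : Fin n → K) : bil Q (t • x) y = t * bil Q x y := by
  revert t x y
  apply hom_ind (d := 2)
    (Pr := fun Q => ∀ (t : K) (x y : Fin n → K), bil Q (t • x) y = t * bil Q x y) _ _ _ hQ
  · intro t x y; simp [bil_poly_zero]
  · intro p q hp hq t x y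
    rw [bil_poly_add, bil_poly_add, hp, hq]; ring
  · intro m c hm t x y
    obtain ⟨l, hl, hev⟩ := monomial_eval_list m hm c
    obtain ⟨i, j, rfl⟩ := List.length_eq_two.mp hl
    simp only [List.map_cons, List.map_nil, List.prod_cons, List.prod_nil, mul_one] at hev
    simp only [bil, hev, Pi.add_apply, Pi.smul_apply, smul_eq_mul]
    ring

lemma bil_diag {Q : MvPolynomial (Fin n) K} (hQ : Q.IsHomogeneous 2) (x : Fin n → K) :
    bil Q x x = eval x Q := by
  revert x
  apply hom_ind (d := 2) (Pr := fun Q => ∀ x : Fin n → K, bil Q x x = eval x Q) _ _ _ hQ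
  · intro x; simp [bil_poly_zero]
  · intro p q hp hq x; rw [bil_poly_add, hp, hq, map_add]
  · intro m c hm x
    obtain ⟨l, hl, hev⟩ := monomial_eval_list m hm c
    obtain ⟨i, j, rfl⟩ := List.length_eq_two.mp hl
    simp only [List.map_cons, List.map_nil, List.prod_cons, List.prod_nil, mul_one] at hev
    simp only [bil, hev, Pi.add_apply]
    ring

section BilDerived

variable {Q : MvPolynomial (Fin n) K} (hQ : Q.IsHomogeneous 2)
include hQ

lemma bil_add_right (x y y' : Fin n → K) : bil Q x (y + y') = bil Q x y + bil Q x y' := by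
  rw [bil_symm, bil_add_left hQ, bil_symm, bil_symm Q y']

lemma bil_smul_right (t : K) (x y : Fin n → K) : bil Q x (t • y) = t * bil Q x y := by
  rw [bil_symm, bil_smul_left hQ, bil_symm]

lemma bil_zero_left (y : Fin n → K) : bil Q 0 y = 0 := by
  have h := bil_smul_left hQ 0 0 y
  simpa using h

lemma bil_zero_right (x : Fin n → K) : bil Q x 0 = 0 := by
  rw [bil_symm]; exact bil_zero_left hQ x

lemma quad_pair_expand (x y : Fin n → K) :
    eval (x + y) Q = eval x Q + 2 * bil Q x y + eval y Q := by
  have h := (bil_diag hQ (x + y)).symm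
  rw [bil_add_left hQ, bil_add_right hQ, bil_add_right hQ] at h
  rw [bil_diag hQ x, bil_diag hQ y, bil_symm Q y x] at h
  rw [h]; ring

lemma quad_expand (pt y : Fin n → K) (t : K) :
    eval (fun i => pt i + t * y i) Q
      = eval pt Q + (2 * bil Q pt y) * t + eval y Q * t ^ 2 := by
  have hty : (fun i => pt i + t * y i) = pt + t • y := funext fun i => rfl
  rw [hty, quad_pair_expand hQ, bil_smul_right hQ, eval_smul_d hQ]
  ring

lemma eval_comp1_quad (pt y : Fin n → K) : eval y (comp 1 pt Q) = 2 * bil Q pt y := by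
  have h : ∀ t : K, eval y (comp 0 pt Q) + eval y (comp 1 pt Q) * t + eval y (comp 2 pt Q) * t ^ 2
      = eval pt Q + (2 * bil Q pt y) * t + eval y Q * t ^ 2 := by
    intro t
    have h1 := expandD hQ pt y t
    have h2 := quad_expand hQ pt y t
    rw [Finset.sum_range_succ, Finset.sum_range_succ, Finset.sum_range_one] at h1
    rw [h1] at h2
    linear_combination h2
  exact quad_match h

end BilDerived

/-! ### Linear forms -/

lemma lin_add {L : MvPolynomial (Fin n) K} (hL : L.IsHomogeneous 1) (x y : Fin n → K) :
    eval (x + y) L = eval x L + eval y L := by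
  revert x y
  apply hom_ind (d := 1)
    (Pr := fun L => ∀ x y : Fin n → K, eval (x + y) L = eval x L + eval y L) _ _ _ hL
  · intro x y; simp
  · intro p q hp hq x y; simp only [map_add]; rw [hp, hq]; ring
  · intro m c hm x y
    obtain ⟨l, hl, hev⟩ := monomial_eval_list m hm c
    obtain ⟨i, rfl⟩ := List.length_eq_one_iff.mp hl
    simp only [List.map_cons, List.map_nil, List.prod_cons, List.prod_nil, mul_one] at hev
    simp only [hev, Pi.add_apply]
    ring

/-! ### Triple combinations -/

lemma eval_combo3 {P : MvPolynomial (Fin n) K} (hP : P.IsHomogeneous 3) (a b c : Fin n → K)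
    (x y z : K)
    (haab : tri P a a b = 0) (habb : tri P a b b = 0) (haac : tri P a a c = 0)
    (hacc : tri P a c c = 0) (hbbc : tri P b b c = 0) (hbcc : tri P b c c = 0)
    (habc : tri P a b c = 0) :
    eval (x • a + y • b + z • c) P = x ^ 3 * eval a P + y ^ 3 * eval b P + z ^ 3 * eval c P := by
  have hbac : tri P b a c = 0 := by rw [tri_symm12]; exact habc
  have hL := tri_add_left hP
  have hM := tri_add_mid hP
  have hR := tri_add_right hP
  have sL := tri_smul_left hP
  have sM := tri_smul_mid hP
  have sR := tri_smul_right hP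
  rw [pair_expand hP (x • a + y • b) (z • c), pair_expand hP (x • a) (y • b)]
  simp only [hL, hM, hR, sL, sM, sR]
  simp only [haab, habb, haac, hacc, hbbc, hbcc, habc, hbac, mul_zero, add_zero, zero_add]
  rw [eval_smul_d hP, eval_smul_d hP, eval_smul_d hP]

lemma eval_combo3_quad {Q : MvPolynomial (Fin n) K} (hQ : Q.IsHomogeneous 2) (a b c : Fin n → K)
    (x y z : K) (hab : bil Q a b = 0) (hac : bil Q a c = 0) (hbc : bil Q b c = 0) :
    eval (x • a + y • b + z • c) Q = x ^ 2 * eval a Q + y ^ 2 * eval b Q + z ^ 2 * eval c Q := by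
  rw [quad_pair_expand hQ (x • a + y • b) (z • c), quad_pair_expand hQ (x • a) (y • b)]
  simp only [bil_add_left hQ, bil_add_right hQ, bil_smul_left hQ, bil_smul_right hQ]
  rw [hab, hac, hbc]
  rw [eval_smul_d hQ, eval_smul_d hQ, eval_smul_d hQ]
  ring

lemma eval_combo3_lin {L : MvPolynomial (Fin n) K} (hL : L.IsHomogeneous 1) (a b c : Fin n → K)
    (x y z : K) :
    eval (x • a + y • b + z • c) L = x * eval a L + y * eval b L + z * eval c L := by
  rw [lin_add hL, lin_add hL, eval_smul_d hL, eval_smul_d hL, eval_smul_d hL]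
  ring

lemma combo_ne_zero {P : MvPolynomial (Fin n) K} (hP : P.IsHomogeneous 3) (a b c : Fin n → K)
    (x y z : K)
    (haab : tri P a a b = 0) (habb : tri P a b b = 0) (haac : tri P a a c = 0)
    (hacc : tri P a c c = 0) (hbbc : tri P b b c = 0) (hbcc : tri P b c c = 0)
    (habc : tri P a b c = 0)
    (hx : x ≠ 0 → eval a P ≠ 0) (hy : y ≠ 0 → eval b P ≠ 0) (hz : z ≠ 0 → eval c P ≠ 0)
    (hne : ¬(x = 0 ∧ y = 0 ∧ z = 0)) :
    x • a + y • b + z • c ≠ 0 := by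
  intro h0
  have hdg := tri_diag hP
  have hL := tri_add_left hP
  have hM := tri_add_mid hP
  have hR := tri_add_right hP
  have sL := tri_smul_left hP
  have sM := tri_smul_mid hP
  have sR := tri_smul_right hP
  -- all permuted vanishing facts
  have p1 : tri P a b a = 0 := by rw [tri_symm23]; exact haab
  have p2 : tri P b a a = 0 := by rw [tri_symm12, tri_symm23]; exact haab
  have p3 : tri P b a b = 0 := by rw [tri_symm12]; exact habb
  have p4 : tri P b b a = 0 := by rw [tri_symm23, tri_symm12]; exact habb
  have p5 : tri P a c a = 0 := by rw [tri_symm23]; exact haac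
  have p6 : tri P c a a = 0 := by rw [tri_symm12, tri_symm23]; exact haac
  have p7 : tri P c a c = 0 := by rw [tri_symm12]; exact hacc
  have p8 : tri P c c a = 0 := by rw [tri_symm23, tri_symm12]; exact hacc
  have p9 : tri P b c b = 0 := by rw [tri_symm23]; exact hbbc
  have p10 : tri P c b b = 0 := by rw [tri_symm12, tri_symm23]; exact hbbc
  have p11 : tri P c b c = 0 := by rw [tri_symm12]; exact hbcc
  have p12 : tri P c c b = 0 := by rw [tri_symm23, tri_symm12]; exact hbcc
  have p13 : tri P b a c = 0 := by rw [tri_symm12]; exact habc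
  have p14 : tri P a c b = 0 := by rw [tri_symm23]; exact habc
  have p15 : tri P c a b = 0 := by rw [tri_symm12, tri_symm23]; exact habc
  have p16 : tri P b c a = 0 := by rw [tri_symm23, tri_symm12]; exact habc
  have p17 : tri P c b a = 0 := by rw [tri_symm12, tri_symm23, tri_symm12]; exact habc
  have key : ∀ w : Fin n → K, tri P (x • a + y • b + z • c) (x • a + y • b + z • c) w = 0 := by
    intro w; rw [h0]
    exact tri_zero_left hP _ _
  have ka := key a
  have kb := key b
  have kc := key c
  simp only [hL, hM, hR, sL, sM, sR, hdg, haab, habb, haac, hacc, hbbc, hbcc, habc,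
    p1, p2, p3, p4, p5, p6, p7, p8, p9, p10, p11, p12, p13, p14, p15, p16, p17,
    mul_zero, add_zero, zero_add] at ka kb kc
  have hxa : x ^ 2 * eval a P = 0 := by linear_combination ka
  have hyb : y ^ 2 * eval b P = 0 := by linear_combination kb
  have hzc : z ^ 2 * eval c P = 0 := by linear_combination kc
  apply hne
  refine ⟨?_, ?_, ?_⟩
  · by_contra hx0
    rcases mul_eq_zero.mp hxa with h | h
    · exact hx0 ((pow_eq_zero_iff (by norm_num : (2:ℕ) ≠ 0)).mp h)
    · exact hx hx0 h
  · by_contra hy0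
    rcases mul_eq_zero.mp hyb with h | h
    · exact hy0 ((pow_eq_zero_iff (by norm_num : (2:ℕ) ≠ 0)).mp h)
    · exact hy hy0 h
  · by_contra hz0
    rcases mul_eq_zero.mp hzc with h | h
    · exact hz0 ((pow_eq_zero_iff (by norm_num : (2:ℕ) ≠ 0)).mp h)
    · exact hz hz0 h

lemma mixed_of_sums {P : MvPolynomial (Fin n) K} (hP : P.IsHomogeneous 3) {a b x : Fin n → K}
    (h1 : tri P a a x = 0) (h2 : tri P b b x = 0) (h3 : tri P (a+b) (a+b) x = 0) :
    tri P a b x = 0 := by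
  rw [tri_add_left hP, tri_add_mid hP, tri_add_mid hP, h1, h2] at h3
  have hsym : tri P b a x = tri P a b x := by rw [tri_symm12]
  rw [hsym] at h3
  have h2' : (2:K) * tri P a b x = 0 := by linear_combination h3
  have := mul_eq_zero.mp h2'
  rcases this with h | h
  · exact absurd h two_ne_zero
  · exact h

lemma bil_mixed_of_sums {Q : MvPolynomial (Fin n) K} (hQ : Q.IsHomogeneous 2) {a b x : Fin n → K}
    (h1 : bil Q a x = 0) (h2 : bil Q b x = 0) (hab : bil Q (a+b) x = 0) : True := trivial

lemma tri_rot (P : MvPolynomial (Fin n) K) (x y z : Fin n → K) : tri P x y z = tri P y z x := by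
  rw [tri_symm12, tri_symm23]

lemma eval_zero_homog {P : MvPolynomial (Fin n) K} {d : ℕ}
    (hP : P.IsHomogeneous d) (hd : d ≠ 0) : eval (0 : Fin n → K) P = 0 := by
  have h := eval_smul_d hP 0 0
  rw [smul_zero] at h
  rw [h, zero_pow hd, zero_mul]

lemma eval_add_smul {P : MvPolynomial (Fin n) K} (hP : P.IsHomogeneous 3) (a b : Fin n → K)
    (lam : K) :
    eval (a + lam • b) P
      = eval a P + 3*lam*tri P a a b + 3*lam^2*tri P a b b + lam^3*eval b P := by
  rw [pair_expand hP, tri_smul_right hP, tri_smul_mid hP, tri_smul_right hP, eval_smul_d hP]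
  ring

lemma evalq_add_smul {Q : MvPolynomial (Fin n) K} (hQ : Q.IsHomogeneous 2) (a b : Fin n → K)
    (lam : K) :
    eval (a + lam • b) Q = eval a Q + 2*lam*bil Q a b + lam^2*eval b Q := by
  rw [quad_pair_expand hQ, bil_smul_right hQ, eval_smul_d hQ]
  ring

lemma evall_add_smul {L : MvPolynomial (Fin n) K} (hL : L.IsHomogeneous 1) (a b : Fin n → K)
    (lam : K) : eval (a + lam • b) L = eval a L + lam * eval b L := by
  rw [lin_add hL, eval_smul_d hL]
  ring

lemma tri_combo1 {P : MvPolynomial (Fin n) K} (hP : P.IsHomogeneous 3) (a b c : Fin n → K)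
    (lam : K) :
    tri P (a + lam • b) (a + lam • b) c
      = tri P a a c + 2*lam*tri P a b c + lam^2*tri P b b c := by
  rw [tri_add_left hP, tri_add_mid hP, tri_add_mid hP, tri_smul_left hP, tri_smul_mid hP,
    tri_smul_mid hP, tri_smul_left hP]
  rw [show tri P b a c = tri P a b c from by rw [tri_symm12]]
  ring

lemma tri_combo2 {P : MvPolynomial (Fin n) K} (hP : P.IsHomogeneous 3) (a b c : Fin n → K)
    (lam : K) :
    tri P (a + lam • b) c c = tri P a c c + lam * tri P b c c := by
  rw [tri_add_left hP, tri_smul_left hP]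

lemma tri_combo3 {P : MvPolynomial (Fin n) K} (hP : P.IsHomogeneous 3) (a b c d : Fin n → K)
    (lam : K) :
    tri P (a + lam • b) c d = tri P a c d + lam * tri P b c d := by
  rw [tri_add_left hP, tri_smul_left hP]

lemma bil_combo {Q : MvPolynomial (Fin n) K} (hQ : Q.IsHomogeneous 2) (a b c : Fin n → K)
    (lam : K) : bil Q (a + lam • b) c = bil Q a c + lam * bil Q b c := by
  rw [bil_add_left hQ, bil_smul_left hQ]

end CR

namespace CR3

local notation "𝕂" => ℚ_[3]

lemma h3ne : (3 : 𝕂) ≠ 0 := by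
  have : ((3:ℕ) : 𝕂) ≠ 0 := Nat.cast_ne_zero.mpr (by norm_num)
  simpa using this

lemma norm3 : ‖(3 : 𝕂)‖ = 1/3 := by
  have h := @Padic.norm_p 3 ⟨by norm_num⟩
  rw [show ((3:ℕ) : 𝕂) = (3 : 𝕂) by push_cast; ring] at h
  rw [h]; norm_num

lemma norm_int_le_one (m : ℤ) : ‖(m : 𝕂)‖ ≤ 1 := Padic.norm_int_le_one m

lemma norm_int_le_ninth {m : ℤ} (h : (9:ℤ) ∣ m) : ‖(m : 𝕂)‖ ≤ 1/9 := by
  have h2 := (Padic.norm_int_le_pow_iff_dvd (p := 3) m 2).mpr (by omega)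
  calc ‖(m : 𝕂)‖ ≤ ((3:ℕ):ℝ)^(-(2:ℕ) : ℤ) := h2
    _ = 1/9 := by norm_num

lemma norm_int_le_third {m : ℤ} (h : (3:ℤ) ∣ m) : ‖(m : 𝕂)‖ ≤ 1/3 := by
  have h2 := (Padic.norm_int_le_pow_iff_dvd (p := 3) m 1).mpr (by omega)
  calc ‖(m : 𝕂)‖ ≤ ((3:ℕ):ℝ)^(-(1:ℕ) : ℤ) := h2
    _ = 1/3 := by norm_num

lemma norm_int_eq_one {m : ℤ} (h : ¬ (3:ℤ) ∣ m) : ‖(m : 𝕂)‖ = 1 := by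
  have h1 : ¬ ‖(m : 𝕂)‖ < 1 := by
    rw [Padic.norm_intCast_lt_one_iff]
    simpa using h
  have h2 := norm_int_le_one m
  rcases lt_or_eq_of_le h2 with h' | h'
  · exact absurd h' h1
  · exact h'

lemma ultra_le (x y : 𝕂) : ‖x + y‖ ≤ max ‖x‖ ‖y‖ := Padic.nonarchimedean x y

lemma norm_eq_of_close {x m : 𝕂} (h : ‖x - m‖ < ‖m‖) : ‖x‖ = ‖m‖ := by
  have hne : ‖x - m‖ ≠ ‖m‖ := ne_of_lt h
  have hmax := Padic.add_eq_max_of_ne (q := x - m) (r := m) hne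
  rw [show x - m + m = x by ring] at hmax
  rw [hmax]
  exact max_eq_right (le_of_lt h)

lemma norm_int_eq_third {m : ℤ} (h3 : (3:ℤ) ∣ m) (h9 : ¬ (9:ℤ) ∣ m) : ‖(m : 𝕂)‖ = 1/3 := by
  obtain ⟨m', rfl⟩ := h3
  have hm' : ¬ (3:ℤ) ∣ m' := by
    intro hc; exact h9 (by obtain ⟨w, rfl⟩ := hc; exact ⟨w, by ring⟩)
  push_cast
  rw [norm_mul, norm3, norm_int_eq_one hm']
  norm_num

lemma approx_sub {x : 𝕂} {a b : ℤ} (h : ‖x - (a:𝕂)‖ ≤ 1/9) (hd : (9:ℤ) ∣ (a - b)) :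
    ‖x - (b:𝕂)‖ ≤ 1/9 := by
  have hx : x - (b:𝕂) = (x - (a:𝕂)) + ((a - b : ℤ) : 𝕂) := by push_cast; ring
  rw [hx]
  exact le_trans (ultra_le _ _) (max_le h (norm_int_le_ninth hd))

/-- Hensel: everything within 1/9 of 1 is a cube in `ℚ_[3]`. -/
lemma cube_root_near_one {w : 𝕂} (h : ‖w - 1‖ ≤ 1/9) : ∃ c : 𝕂, c ^ 3 = w := by
  have h9 : ‖(9 : 𝕂)‖ = 1/9 := by
    rw [show (9 : 𝕂) = (3:𝕂) * 3 by norm_num, norm_mul, norm3]; norm_num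
  have h9ne : (9 : 𝕂) ≠ 0 := by
    intro hc
    apply h3ne
    have h33 : (3:𝕂) * 3 = 0 := by rw [show (3:𝕂)*3 = 9 by norm_num, hc]
    rcases mul_eq_zero.mp h33 with h' | h' <;> exact h'
  set e' : 𝕂 := (w - 1) / 9 with he'
  have he'le : ‖e'‖ ≤ 1 := by
    rw [he', norm_div, h9]
    rw [div_le_one (by norm_num)]
    linarith
  set e : ℤ_[3] := ⟨e', he'le⟩ with he
  set F : Polynomial ℤ_[3] :=
    Polynomial.C 3 * Polynomial.X ^ 3 + Polynomial.C 3 * Polynomial.X ^ 2 + Polynomial.X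
      - Polynomial.C e with hF
  have hFeval : F.eval e = 3 * (e ^ 3 + e ^ 2) := by
    simp [hF]; ring
  have hFdeval : F.derivative.eval e = (3 * e + 1) ^ 2 := by
    simp [hF]; ring
  have hn3 : ‖(3 : ℤ_[3])‖ = 1/3 := by
    have h := @PadicInt.norm_p 3 ⟨by norm_num⟩
    rw [show ((3:ℕ) : ℤ_[3]) = (3 : ℤ_[3]) by push_cast; ring] at h
    rw [h]; norm_num
  have hne1 : ‖(3:ℤ_[3]) * e‖ < 1 := by
    rw [norm_mul, hn3]
    nlinarith [PadicInt.norm_le_one e, norm_nonneg e]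
  have hnorm1 : ‖3 * e + 1‖ = 1 := by
    have hmax := PadicInt.norm_add_eq_max_of_ne (q := 3*e) (r := 1)
      (by rw [norm_one]; exact ne_of_lt hne1)
    rw [norm_one] at hmax
    rw [hmax]
    exact max_eq_right (le_of_lt hne1)
  have hsq : ‖((3*e+1)^2 : ℤ_[3])‖ = 1 := by
    rw [show ((3*e+1)^2 : ℤ_[3]) = (3*e+1)*(3*e+1) by ring, norm_mul, hnorm1]
    norm_num
  have hnorm : ‖F.eval e‖ < ‖F.derivative.eval e‖ ^ 2 := by
    rw [hFeval, hFdeval, hsq, norm_mul, hn3]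
    nlinarith [PadicInt.norm_le_one (e^3 + e^2), norm_nonneg (e^3+e^2)]
  obtain ⟨z, hz, _⟩ := hensels_lemma hnorm
  have hzeval : F.eval z = 3*z^3 + 3*z^2 + z - e := by simp [hF]; try ring
  rw [Polynomial.coe_aeval_eq_eval, hzeval] at hz
  have hc3 : (1 + 3*z)^3 = 1 + 9 * e := by linear_combination (9 : ℤ_[3]) * hz
  refine ⟨((1 + 3*z : ℤ_[3]) : 𝕂), ?_⟩
  have hcast : (((1 + 3*z : ℤ_[3]) : 𝕂))^3 = ((((1+3*z)^3 : ℤ_[3])) : 𝕂) := by push_cast; ring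
  rw [hcast, hc3]
  push_cast
  have h9c : ((9 : ℤ_[3]) : 𝕂) = (9 : 𝕂) := by
    rw [show (9:ℤ_[3]) = ((9:ℕ):ℤ_[3]) by norm_cast, PadicInt.coe_natCast]
    norm_cast
  rw [h9c, show ((e : ℤ_[3]) : 𝕂) = e' from rfl, he']
  field_simp
  ring

/-- Cube roots near ±1 mod 9. -/
lemma cube_of_pm {w : 𝕂} {a : ℤ} (hw : ‖w - (a:𝕂)‖ ≤ 1/9) (ha : a % 9 = 1 ∨ a % 9 = 8) :
    ∃ c : 𝕂, c ^ 3 = w := by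
  rcases ha with ha | ha
  · have h1 : ‖w - (1:𝕂)‖ ≤ 1/9 := by
      have := approx_sub hw (b := 1) (by omega)
      simpa using this
    exact cube_root_near_one h1
  · have h1 : ‖w - ((-1 : ℤ):𝕂)‖ ≤ 1/9 := approx_sub hw (by omega)
    have h2 : ‖(-w) - (1:𝕂)‖ ≤ 1/9 := by
      rw [show -w - (1:𝕂) = -(w - ((-1:ℤ):𝕂)) by push_cast; ring, norm_neg]
      exact h1
    obtain ⟨c, hc⟩ := cube_root_near_one h2
    exact ⟨-c, by rw [show (-c)^3 = -(c^3) by ring, hc]; ring⟩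

/-- Integer approximation of a unit. -/
lemma unit_approx {u : 𝕂} (hu : ‖u‖ = 1) :
    ∃ t : ℕ, t < 9 ∧ t % 3 ≠ 0 ∧ ‖u - ((t:ℤ):𝕂)‖ ≤ 1/9 := by
  have hle : ‖u‖ ≤ 1 := le_of_eq hu
  set x : ℤ_[3] := ⟨u, hle⟩ with hx
  set t := x.appr 2 with ht
  have ht9 : t < 9 := by
    have := PadicInt.appr_lt x 2
    simpa using this
  have hspec := PadicInt.appr_spec 2 x
  have hnorm : ‖x - (t : ℤ_[3])‖ ≤ ((3:ℕ):ℝ)^(-(2:ℕ) : ℤ) := by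
    rw [PadicInt.norm_le_pow_iff_mem_span_pow]
    exact_mod_cast hspec
  have hnormQ : ‖u - ((t:ℤ):𝕂)‖ ≤ 1/9 := by
    have hcoe : ((x - (t : ℤ_[3]) : ℤ_[3]) : 𝕂) = u - ((t:ℤ):𝕂) := by
      push_cast
      rfl
    rw [← hcoe, ← PadicInt.norm_def]
    calc ‖x - (t : ℤ_[3])‖ ≤ ((3:ℕ):ℝ)^(-(2:ℕ) : ℤ) := hnorm
      _ = 1/9 := by norm_num
  refine ⟨t, ht9, ?_, hnormQ⟩
  intro hdvd
  have h3t : (3:ℤ) ∣ (t:ℤ) := by omega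
  have hut : ‖u‖ ≤ max (1/9) (1/3) := by
    have := ultra_le (u - ((t:ℤ):𝕂)) ((t:ℤ):𝕂)
    rw [show u - ((t:ℤ):𝕂) + ((t:ℤ):𝕂) = u by ring] at this
    exact le_trans this (max_le_max hnormQ (norm_int_le_third h3t))
  rw [hu] at hut
  have : max (1/9 : ℝ) (1/3) = 1/3 := by norm_num
  rw [this] at hut
  linarith

/-- Decomposition of a nonzero 3-adic number. -/
lemma decomp {γ : 𝕂} (h : γ ≠ 0) :
    ∃ (k : ℤ) (u : 𝕂) (t : ℕ), γ = (3:𝕂)^k * u ∧ ‖u‖ = 1 ∧ t < 9 ∧ t % 3 ≠ 0 ∧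
      ‖u - ((t:ℤ):𝕂)‖ ≤ 1/9 := by
  set k := γ.valuation with hk
  have hnorm : ‖γ‖ = (3:ℝ)^(-k) := by
    have := Padic.norm_eq_zpow_neg_valuation h
    rw [← hk] at this
    exact_mod_cast this
  set u : 𝕂 := γ * (3:𝕂)^(-k) with hu
  have hun : ‖u‖ = 1 := by
    rw [hu, norm_mul, norm_zpow, norm3, hnorm]
    rw [show ((1:ℝ)/3) = (3:ℝ)⁻¹ by norm_num, ← zpow_neg_one, ← zpow_mul]
    rw [← zpow_add₀ (by norm_num : (3:ℝ) ≠ 0)]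
    norm_num
  have hdecomp : γ = (3:𝕂)^k * u := by
    rw [hu]
    rw [show (3:𝕂)^k * (γ * (3:𝕂)^(-k)) = γ * ((3:𝕂)^k * (3:𝕂)^(-k)) by ring]
    rw [← zpow_add₀ h3ne]
    simp
  obtain ⟨t, ht9, ht3, htapprox⟩ := unit_approx hun
  exact ⟨k, u, t, hdecomp, hun, ht9, ht3, htapprox⟩

/-! ### residue tables -/

def inv9 : ℕ → ℕ := fun t =>
  if t = 1 then 1 else if t = 2 then 5 else if t = 4 then 7 else if t = 5 then 2
  else if t = 7 then 4 else 8

def rel9 (a b : ℕ) : Prop := (b * inv9 a) % 9 = 1 ∨ (b * inv9 a) % 9 = 8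

instance (a b : ℕ) : Decidable (rel9 a b) := by unfold rel9; infer_instance

lemma ratio_approx {u v : 𝕂} {a b c : ℤ} (hv : ‖v‖ = 1) (hu9 : ‖u - (a:𝕂)‖ ≤ 1/9)
    (hv9 : ‖v - (b:𝕂)‖ ≤ 1/9) (hd : (9:ℤ) ∣ (a - c * b)) : ‖u / v - (c:𝕂)‖ ≤ 1/9 := by
  have hvne : v ≠ 0 := by intro h; rw [h] at hv; simp at hv
  have hkey : u / v - (c:𝕂)
      = ((u - (a:𝕂)) + (-(c:𝕂)) * (v - (b:𝕂)) + ((a - c * b : ℤ):𝕂)) / v := by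
    field_simp
    push_cast
    ring
  rw [hkey, norm_div, hv, div_one]
  refine le_trans (ultra_le _ _) (max_le (le_trans (ultra_le _ _) (max_le hu9 ?_))
    (norm_int_le_ninth hd))
  rw [norm_mul, norm_neg]
  calc ‖(c:𝕂)‖ * ‖v - (b:𝕂)‖ ≤ 1 * (1/9) :=
        mul_le_mul (norm_int_le_one c) hv9 (norm_nonneg _) zero_le_one
    _ = 1/9 := by norm_num

lemma range6 {t : ℕ} (h9 : t < 9) (h3 : t % 3 ≠ 0) :
    t = 1 ∨ t = 2 ∨ t = 4 ∨ t = 5 ∨ t = 7 ∨ t = 8 := by omega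

lemma sigma_approx {ua ub : 𝕂} {ta tb : ℕ} (hua : ‖ua‖ = 1)
    (ha : ‖ua - ((ta:ℤ):𝕂)‖ ≤ 1/9) (hb : ‖ub - ((tb:ℤ):𝕂)‖ ≤ 1/9)
    (hta9 : ta < 9) (hta3 : ta % 3 ≠ 0) :
    ‖ub / ua - ((((tb * inv9 ta) % 9 : ℕ) : ℤ) : 𝕂)‖ ≤ 1/9 := by
  apply ratio_approx hua hb ha
  rcases range6 hta9 hta3 with rfl|rfl|rfl|rfl|rfl|rfl <;> simp [inv9] <;> omega

lemma A_range {ta tb : ℕ} (hta9 : ta < 9) (hta3 : ta % 3 ≠ 0) (htb9 : tb < 9)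
    (htb3 : tb % 3 ≠ 0) :
    (tb * inv9 ta) % 9 = 1 ∨ (tb * inv9 ta) % 9 = 2 ∨ (tb * inv9 ta) % 9 = 4 ∨
      (tb * inv9 ta) % 9 = 5 ∨ (tb * inv9 ta) % 9 = 7 ∨ (tb * inv9 ta) % 9 = 8 := by
  rcases range6 hta9 hta3 with rfl|rfl|rfl|rfl|rfl|rfl <;>
    rcases range6 htb9 htb3 with rfl|rfl|rfl|rfl|rfl|rfl <;> decide

lemma dec_ne_zero {γ u : 𝕂} {k : ℤ} (heq : γ = (3:𝕂)^k * u) (hu : ‖u‖ = 1) : γ ≠ 0 := by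
  rw [heq]
  apply mul_ne_zero (zpow_ne_zero k h3ne)
  intro h; rw [h] at hu; simp at hu

lemma zpow_cube (s : ℤ) : ((3:𝕂)^s)^3 = (3:𝕂)^(3*s) := by
  rw [show (3:ℤ)*s = s+s+s by ring, zpow_add₀ h3ne, zpow_add₀ h3ne, pow_succ, pow_succ, pow_one]

/-- Binary solution when the two coefficients lie in the same cube class. -/
lemma arith_pair {γa γb ua ub : 𝕂} {ka kb : ℤ} {ta tb : ℕ}
    (hadec : γa = (3:𝕂)^ka * ua) (hua : ‖ua‖ = 1) (hta9 : ta < 9) (hta3 : ta % 3 ≠ 0)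
    (happa : ‖ua - ((ta:ℤ):𝕂)‖ ≤ 1/9)
    (hbdec : γb = (3:𝕂)^kb * ub) (hub : ‖ub‖ = 1) (htb9 : tb < 9) (htb3 : tb % 3 ≠ 0)
    (happb : ‖ub - ((tb:ℤ):𝕂)‖ ≤ 1/9)
    (hk : (kb - ka) % 3 = 0) (hrel : rel9 ta tb) :
    ∃ c : 𝕂, γa * c ^ 3 + γb = 0 := by
  have huane : ua ≠ 0 := by intro h; rw [h] at hua; simp at hua
  have hσ := sigma_approx hua happa happb hta9 hta3
  set A : ℤ := (((tb * inv9 ta) % 9 : ℕ) : ℤ) with hA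
  have hneg : ‖(-(ub/ua)) - ((-A : ℤ):𝕂)‖ ≤ 1/9 := by
    rw [show (-(ub/ua)) - ((-A : ℤ):𝕂) = -((ub/ua) - (A:𝕂)) by push_cast; ring, norm_neg]
    exact hσ
  have hmod : (-A) % 9 = 1 ∨ (-A) % 9 = 8 := by
    rcases hrel with h | h <;> omega
  obtain ⟨c₀, hc₀⟩ := cube_of_pm hneg hmod
  set s := (kb - ka)/3 with hs
  have h3s : kb - ka = 3*s := by omega
  refine ⟨(3:𝕂)^s * c₀, ?_⟩
  have hz : (3:𝕂)^ka * (3:𝕂)^(kb-ka) = (3:𝕂)^kb := by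
    rw [← zpow_add₀ h3ne]; congr 1; ring
  have hdiv : ua * (ub/ua) = ub := by field_simp
  calc γa * ((3:𝕂)^s * c₀)^3 + γb
      = (3:𝕂)^ka * ua * (((3:𝕂)^s)^3 * c₀^3) + (3:𝕂)^kb * ub := by rw [hadec, hbdec]; ring
    _ = (3:𝕂)^ka * ua * ((3:𝕂)^(kb-ka) * (-(ub/ua))) + (3:𝕂)^kb * ub := by
        rw [zpow_cube, ← h3s, hc₀]
    _ = -(((3:𝕂)^ka * (3:𝕂)^(kb-ka)) * (ua * (ub/ua))) + (3:𝕂)^kb * ub := by ring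
    _ = 0 := by rw [hdiv, hz]; ring

/-- Key ternary lemma finish. -/
lemma R3_finish {ua ub uc : 𝕂} (hua : ‖ua‖ = 1)
    {A B : ℤ} (hσ : ‖ub/ua - (A:𝕂)‖ ≤ 1/9) (hτ : ‖uc/ua - (B:𝕂)‖ ≤ 1/9)
    (ε s2 s3 : ℤ) (hε : ε = 1 ∨ ε = -1) (hs2 : s2 = 1 ∨ s2 = -1) (hs3 : s3 = 1 ∨ s3 = -1)
    (hdvd : (9:ℤ) ∣ (ε + A*s2 + 3*(B*s3))) :
    ∃ x y z : 𝕂, ¬(x = 0 ∧ y = 0 ∧ z = 0) ∧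
      ua * x^3 + ub * y^3 + (3:𝕂) * (uc * z^3) = 0 := by
  have huane : ua ≠ 0 := by intro h; rw [h] at hua; simp at hua
  set w : 𝕂 := -((ub/ua) * ((s2:ℤ):𝕂) + 3*((uc/ua) * ((s3:ℤ):𝕂))) with hw
  have happ : ‖w - ((ε:ℤ):𝕂)‖ ≤ 1/9 := by
    have hkey : w - ((ε:ℤ):𝕂)
        = (-(s2:𝕂)) * (ub/ua - (A:𝕂)) + (-(3:𝕂)*(s3:𝕂)) * (uc/ua - (B:𝕂))
          + ((-(ε + A*s2 + 3*(B*s3)) : ℤ):𝕂) := by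
      rw [hw]; push_cast; ring
    rw [hkey]
    refine le_trans (ultra_le _ _) (max_le (le_trans (ultra_le _ _) (max_le ?_ ?_)) ?_)
    · rw [norm_mul, norm_neg]
      calc ‖((s2:ℤ):𝕂)‖ * ‖ub/ua - (A:𝕂)‖ ≤ 1 * (1/9) :=
            mul_le_mul (norm_int_le_one s2) hσ (norm_nonneg _) zero_le_one
        _ = 1/9 := by norm_num
    · rw [norm_mul]
      have h1 : ‖(-(3:𝕂))*((s3:ℤ):𝕂)‖ ≤ 1 := by
        rw [norm_mul, norm_neg, norm3]
        calc (1/3) * ‖((s3:ℤ):𝕂)‖ ≤ (1/3) * 1 := by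
              have := norm_int_le_one s3
              nlinarith [norm_nonneg ((s3:ℤ):𝕂)]
          _ ≤ 1 := by norm_num
      calc ‖(-(3:𝕂))*((s3:ℤ):𝕂)‖ * ‖uc/ua - (B:𝕂)‖ ≤ 1 * (1/9) :=
            mul_le_mul h1 hτ (norm_nonneg _) zero_le_one
        _ = 1/9 := by norm_num
    · apply norm_int_le_ninth
      omega
  have hmod : ε % 9 = 1 ∨ ε % 9 = 8 := by rcases hε with rfl | rfl <;> omega
  obtain ⟨c, hc⟩ := cube_of_pm happ hmod
  refine ⟨c, ((s2:ℤ):𝕂), ((s3:ℤ):𝕂), ?_, ?_⟩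
  · intro ⟨_, hy, _⟩
    rcases hs2 with rfl | rfl <;> simp at hy
  · have hs2c : (((s2:ℤ):𝕂))^3 = ((s2:ℤ):𝕂) := by rcases hs2 with rfl | rfl <;> norm_num
    have hs3c : (((s3:ℤ):𝕂))^3 = ((s3:ℤ):𝕂) := by rcases hs3 with rfl | rfl <;> norm_num
    rw [hc, hs2c, hs3c, hw]
    field_simp
    ring

/-- Level-raising combination. -/
lemma arith_levelup {γa γb ua ub : 𝕂} {ka kb : ℤ} {ta tb : ℕ}
    (hadec : γa = (3:𝕂)^ka * ua) (hua : ‖ua‖ = 1) (hta9 : ta < 9) (hta3 : ta % 3 ≠ 0)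
    (happa : ‖ua - ((ta:ℤ):𝕂)‖ ≤ 1/9)
    (hbdec : γb = (3:𝕂)^kb * ub) (hub : ‖ub‖ = 1) (htb9 : tb < 9) (htb3 : tb % 3 ≠ 0)
    (happb : ‖ub - ((tb:ℤ):𝕂)‖ ≤ 1/9)
    (hk : (kb - ka) % 3 = 0) (hrel : ¬ rel9 ta tb) :
    ∃ (lam u' : 𝕂), ‖u'‖ = 1 ∧ γa + lam^3 * γb = (3:𝕂)^(ka+1) * u' := by
  have huane : ua ≠ 0 := by intro h; rw [h] at hua; simp at hua
  have hσ := sigma_approx hua happa happb hta9 hta3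
  set A : ℤ := (((tb * inv9 ta) % 9 : ℕ) : ℤ) with hA
  have hAr : A = 2 ∨ A = 4 ∨ A = 5 ∨ A = 7 := by
    have := A_range hta9 hta3 htb9 htb3
    unfold rel9 at hrel
    omega
  -- choose sign
  obtain ⟨s, hs, hm3, hm9⟩ : ∃ s : ℤ, (s = 1 ∨ s = -1) ∧ (3:ℤ) ∣ (1 + A*s) ∧
      ¬ (9:ℤ) ∣ (1 + A*s) := by
    rcases hAr with h | h | h | h
    · exact ⟨1, Or.inl rfl, by rw [h]; norm_num, by rw [h]; norm_num⟩
    · exact ⟨-1, Or.inr rfl, by rw [h]; norm_num, by rw [h]; norm_num⟩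
    · exact ⟨1, Or.inl rfl, by rw [h]; norm_num, by rw [h]; norm_num⟩
    · exact ⟨-1, Or.inr rfl, by rw [h]; norm_num, by rw [h]; norm_num⟩
  set w : 𝕂 := 1 + (ub/ua) * ((s:ℤ):𝕂) with hw
  have happw : ‖w - ((1 + A*s : ℤ):𝕂)‖ ≤ 1/9 := by
    have hkey : w - ((1 + A*s : ℤ):𝕂) = ((s:ℤ):𝕂) * (ub/ua - (A:𝕂)) := by
      rw [hw]; push_cast; ring
    rw [hkey, norm_mul]
    calc ‖((s:ℤ):𝕂)‖ * ‖ub/ua - (A:𝕂)‖ ≤ 1 * (1/9) :=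
          mul_le_mul (norm_int_le_one s) hσ (norm_nonneg _) zero_le_one
      _ = 1/9 := by norm_num
  have hnm : ‖((1 + A*s : ℤ):𝕂)‖ = 1/3 := norm_int_eq_third hm3 hm9
  have hclose : ‖w - ((1 + A*s : ℤ):𝕂)‖ < ‖((1 + A*s : ℤ):𝕂)‖ := by
    rw [hnm]; linarith
  have hnw : ‖w‖ = 1/3 := by rw [norm_eq_of_close hclose]; exact hnm
  have hwne : w ≠ 0 := by intro h; rw [h] at hnw; simp at hnw
  set sb := (kb - ka)/3 with hsb
  have h3s : kb - ka = 3*sb := by omega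
  refine ⟨((s:ℤ):𝕂) * (3:𝕂)^(-sb), ua * w / 3, ?_, ?_⟩
  · rw [norm_div, norm_mul, hua, hnw, norm3]
    norm_num
  · have hscube : (((s:ℤ):𝕂))^3 = ((s:ℤ):𝕂) := by rcases hs with rfl | rfl <;> norm_num
    have hz1 : (3:𝕂)^kb * ((3:𝕂)^(-sb))^3 = (3:𝕂)^ka := by
      rw [zpow_cube, ← zpow_add₀ h3ne]
      congr 1
      omega
    have hz2 : (3:𝕂)^(ka+1) = (3:𝕂)^ka * 3 := by
      rw [zpow_add₀ h3ne]; norm_num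
    calc γa + (((s:ℤ):𝕂) * (3:𝕂)^(-sb))^3 * γb
        = (3:𝕂)^ka * ua + ((s:ℤ):𝕂) * ((3:𝕂)^kb * ((3:𝕂)^(-sb))^3) * ub := by
          rw [hadec, hbdec, mul_pow, hscube]; ring
      _ = (3:𝕂)^ka * (ua * w) := by rw [hz1, hw]; field_simp
      _ = (3:𝕂)^(ka+1) * (ua * w / 3) := by rw [hz2]; field_simp

/-- The main ternary isotropy lemma: levels (0,0,1). -/
lemma arith_triple {γa γb γc ua ub uc : 𝕂} {ka kb kc : ℤ} {ta tb tc : ℕ}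
    (hadec : γa = (3:𝕂)^ka * ua) (hua : ‖ua‖ = 1) (hta9 : ta < 9) (hta3 : ta % 3 ≠ 0)
    (happa : ‖ua - ((ta:ℤ):𝕂)‖ ≤ 1/9)
    (hbdec : γb = (3:𝕂)^kb * ub) (hub : ‖ub‖ = 1) (htb9 : tb < 9) (htb3 : tb % 3 ≠ 0)
    (happb : ‖ub - ((tb:ℤ):𝕂)‖ ≤ 1/9)
    (hcdec : γc = (3:𝕂)^kc * uc) (huc : ‖uc‖ = 1) (htc9 : tc < 9) (htc3 : tc % 3 ≠ 0)
    (happc : ‖uc - ((tc:ℤ):𝕂)‖ ≤ 1/9)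
    (hk1 : (kb - ka) % 3 = 0) (hk2 : (kc - ka) % 3 = 1) :
    ∃ x y z : 𝕂, ¬(x = 0 ∧ y = 0 ∧ z = 0) ∧ γa * x^3 + γb * y^3 + γc * z^3 = 0 := by
  by_cases hrel : rel9 ta tb
  · obtain ⟨c, hc⟩ := arith_pair hadec hua hta9 hta3 happa hbdec hub htb9 htb3 happb hk1 hrel
    refine ⟨c, 1, 0, ?_, ?_⟩
    · intro ⟨_, hy, _⟩; exact one_ne_zero hy
    · rw [show (0:𝕂)^3 = 0 by ring, mul_zero, add_zero, show (1:𝕂)^3 = 1 by ring, mul_one]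
      exact hc
  · have huane : ua ≠ 0 := by intro h; rw [h] at hua; simp at hua
    have hσ := sigma_approx hua happa happb hta9 hta3
    have hτ := sigma_approx hua happa happc hta9 hta3
    set A : ℤ := (((tb * inv9 ta) % 9 : ℕ) : ℤ) with hA
    set B : ℤ := (((tc * inv9 ta) % 9 : ℕ) : ℤ) with hB
    have hAr : A = 2 ∨ A = 4 ∨ A = 5 ∨ A = 7 := by
      have := A_range hta9 hta3 htb9 htb3
      unfold rel9 at hrel
      omega
    have hBr : B % 3 = 1 ∨ B % 3 = 2 := by
      have := A_range hta9 hta3 htc9 htc3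
      omega
    -- choose the table entry
    obtain ⟨ε, s2, s3, hε, hs2, hs3, hdvd⟩ : ∃ ε s2 s3 : ℤ, (ε = 1 ∨ ε = -1) ∧
        (s2 = 1 ∨ s2 = -1) ∧ (s3 = 1 ∨ s3 = -1) ∧ (9:ℤ) ∣ (ε + A*s2 + 3*(B*s3)) := by
      rcases hAr with h | h | h | h <;> rcases hBr with h' | h'
      · exact ⟨-1, -1, 1, Or.inr rfl, Or.inr rfl, Or.inl rfl, by omega⟩
      · exact ⟨1, 1, 1, Or.inl rfl, Or.inl rfl, Or.inl rfl, by omega⟩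
      · exact ⟨1, -1, 1, Or.inl rfl, Or.inr rfl, Or.inl rfl, by omega⟩
      · exact ⟨-1, 1, 1, Or.inr rfl, Or.inl rfl, Or.inl rfl, by omega⟩
      · exact ⟨1, 1, 1, Or.inl rfl, Or.inl rfl, Or.inl rfl, by omega⟩
      · exact ⟨-1, -1, 1, Or.inr rfl, Or.inr rfl, Or.inl rfl, by omega⟩
      · exact ⟨-1, 1, 1, Or.inr rfl, Or.inl rfl, Or.inl rfl, by omega⟩
      · exact ⟨1, -1, 1, Or.inl rfl, Or.inr rfl, Or.inl rfl, by omega⟩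
    obtain ⟨x₀, y₀, z₀, hne0, heq0⟩ := R3_finish hua hσ hτ ε s2 s3 hε hs2 hs3 hdvd
    set sb := (kb - ka)/3 with hsb
    set sc := (kc - ka - 1)/3 with hsc
    have h3b : kb - ka = 3*sb := by omega
    have h3c : kc - ka - 1 = 3*sc := by omega
    refine ⟨x₀, (3:𝕂)^(-sb) * y₀, (3:𝕂)^(-sc) * z₀, ?_, ?_⟩
    · intro ⟨hx, hy, hz⟩
      apply hne0
      refine ⟨hx, ?_, ?_⟩
      · rcases mul_eq_zero.mp hy with h | h
        · exact absurd h (zpow_ne_zero _ h3ne)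
        · exact h
      · rcases mul_eq_zero.mp hz with h | h
        · exact absurd h (zpow_ne_zero _ h3ne)
        · exact h
    · have hzb : (3:𝕂)^kb * ((3:𝕂)^(-sb))^3 = (3:𝕂)^ka := by
        rw [zpow_cube, ← zpow_add₀ h3ne]; congr 1; omega
      have hzc : (3:𝕂)^kc * ((3:𝕂)^(-sc))^3 = (3:𝕂)^ka * 3 := by
        rw [zpow_cube, ← zpow_add₀ h3ne, show kc + 3 * -sc = ka + 1 by omega, zpow_add₀ h3ne,
          zpow_one]
      calc γa * x₀^3 + γb * ((3:𝕂)^(-sb) * y₀)^3 + γc * ((3:𝕂)^(-sc) * z₀)^3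
          = (3:𝕂)^ka * (ua * x₀^3) + ((3:𝕂)^kb * ((3:𝕂)^(-sb))^3) * (ub * y₀^3)
            + ((3:𝕂)^kc * ((3:𝕂)^(-sc))^3) * (uc * z₀^3) := by
            rw [hadec, hbdec, hcdec]; ring
        _ = (3:𝕂)^ka * (ua * x₀^3 + ub * y₀^3 + (3:𝕂) * (uc * z₀^3)) := by
            rw [hzb, hzc]; ring
        _ = 0 := by rw [heq0]; ring

/-- Pigeonhole: among four units, two lie in the same cube class. -/
lemma pigeon_dec : ∀ a ∈ [1,2,4,5,7,8], ∀ b ∈ [1,2,4,5,7,8], ∀ c ∈ [1,2,4,5,7,8],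
    ∀ d ∈ [(1:ℕ),2,4,5,7,8],
    ¬ rel9 a b → ¬ rel9 a c → ¬ rel9 b c → (rel9 a d ∨ rel9 b d ∨ rel9 c d) := by decide

lemma mem6 {t : ℕ} (h9 : t < 9) (h3 : t % 3 ≠ 0) : t ∈ [(1:ℕ),2,4,5,7,8] := by
  rcases range6 h9 h3 with rfl|rfl|rfl|rfl|rfl|rfl <;> simp


end CR3


namespace CRMain
open MvPolynomial CR CR3

variable {r₃ r₂ r₁ : ℕ} {n : ℕ}
variable (C : Fin r₃ → MvPolynomial (Fin n) ℚ_[3])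
variable (Q : Fin r₂ → MvPolynomial (Fin n) ℚ_[3])
variable (L : Fin r₁ → MvPolynomial (Fin n) ℚ_[3])

def Kill (v : Fin n → ℚ_[3]) : Prop :=
  (∀ j : Fin r₃, j.val ≠ 0 → eval v (C j) = 0) ∧ (∀ i, eval v (Q i) = 0) ∧
    (∀ i, eval v (L i) = 0)

def Pp (a b : Fin n → ℚ_[3]) : Prop :=
  (∀ j, tri (C j) a a b = 0) ∧ (∀ j, tri (C j) a b b = 0) ∧ (∀ i, bil (Q i) a b = 0)

def Tm (a b c : Fin n → ℚ_[3]) : Prop := ∀ j, tri (C j) a b c = 0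

variable {hCdum : Unit}

lemma Pp_symm {a b} (h : Pp C Q a b) : Pp C Q b a := by
  obtain ⟨h1, h2, h3⟩ := h
  refine ⟨fun j => ?_, fun j => ?_, fun i => ?_⟩
  · rw [tri_symm23, tri_symm12]; exact h2 j
  · rw [tri_symm12, tri_symm23]; exact h1 j
  · rw [bil_symm]; exact h3 i

lemma Pp_zero_right (hC : ∀ i, (C i).IsHomogeneous 3) (hQ : ∀ i, (Q i).IsHomogeneous 2) (a) : Pp C Q a 0 :=
  ⟨fun j => tri_zero_right (hC j) _ _, fun j => tri_zero_mid (hC j) _ _,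
   fun i => bil_zero_right (hQ i) _⟩

lemma Tm_zero_right (hC : ∀ i, (C i).IsHomogeneous 3) (a b) : Tm C a b 0 := fun j => tri_zero_right (hC j) _ _

lemma Kill_zero (hC : ∀ i, (C i).IsHomogeneous 3) (hQ : ∀ i, (Q i).IsHomogeneous 2) (hL : ∀ i, (L i).IsHomogeneous 1) : Kill C Q L 0 :=
  ⟨fun j _ => eval_zero_homog (hC j) (by norm_num),
   fun i => eval_zero_homog (hQ i) (by norm_num),
   fun i => eval_zero_homog (hL i) (by norm_num)⟩

lemma Kill_combo (hC : ∀ i, (C i).IsHomogeneous 3) (hQ : ∀ i, (Q i).IsHomogeneous 2) (hL : ∀ i, (L i).IsHomogeneous 1) {a b : Fin n → ℚ_[3]} {lam : ℚ_[3]} (hKa : Kill C Q L a) (hKb : Kill C Q L b)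
    (hab : Pp C Q a b) : Kill C Q L (a + lam • b) := by
  obtain ⟨ka1, ka2, ka3⟩ := hKa
  obtain ⟨kb1, kb2, kb3⟩ := hKb
  obtain ⟨p1, p2, p3⟩ := hab
  refine ⟨fun j hj => ?_, fun i => ?_, fun i => ?_⟩
  · rw [eval_add_smul (hC j), ka1 j hj, kb1 j hj, p1 j, p2 j]; ring
  · rw [evalq_add_smul (hQ i), ka2 i, kb2 i, p3 i]; ring
  · rw [evall_add_smul (hL i), ka3 i, kb3 i]; ring

lemma Pp_combo (hC : ∀ i, (C i).IsHomogeneous 3) (hQ : ∀ i, (Q i).IsHomogeneous 2) {a b c : Fin n → ℚ_[3]} {lam : ℚ_[3]} (hab : Pp C Q a b) (hac : Pp C Q a c)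
    (hbc : Pp C Q b c) (hM : Tm C a b c) : Pp C Q (a + lam • b) c := by
  refine ⟨fun j => ?_, fun j => ?_, fun i => ?_⟩
  · rw [tri_combo1 (hC j), hac.1 j, hbc.1 j, hM j]; ring
  · rw [tri_combo2 (hC j), hac.2.1 j, hbc.2.1 j]; ring
  · rw [bil_combo (hQ i), hac.2.2 i, hbc.2.2 i]; ring

lemma eval0_combo (hC : ∀ i, (C i).IsHomogeneous 3) {a b : Fin n → ℚ_[3]} {lam : ℚ_[3]} (j : Fin r₃) (hab : Pp C Q a b) :
    eval (a + lam • b) (C j) = eval a (C j) + lam^3 * eval b (C j) := by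
  rw [eval_add_smul (hC j), hab.1 j, hab.2.1 j]; ring

/-- The final assembly: from a compatible triple and a diagonal solution, solve the system. -/
lemma finishW (hC : ∀ i, (C i).IsHomogeneous 3) (hQ : ∀ i, (Q i).IsHomogeneous 2)
    (hL : ∀ i, (L i).IsHomogeneous 1) (hr₃ : 0 < r₃) {a b c : Fin n → ℚ_[3]} {x y z : ℚ_[3]}
    (hab : Pp C Q a b) (hac : Pp C Q a c) (hbc : Pp C Q b c) (hM : Tm C a b c)
    (hKa : Kill C Q L a) (hKb : Kill C Q L b) (hKc : Kill C Q L c)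
    (hdiag : x^3 * eval a (C ⟨0, hr₃⟩) + y^3 * eval b (C ⟨0, hr₃⟩)
      + z^3 * eval c (C ⟨0, hr₃⟩) = 0)
    (hvne : x • a + y • b + z • c ≠ 0) :
    ∃ v : Fin n → ℚ_[3], v ≠ 0 ∧ (∀ i, eval v (C i) = 0) ∧ (∀ i, eval v (Q i) = 0) ∧
      (∀ i, eval v (L i) = 0) := by
  refine ⟨x • a + y • b + z • c, hvne, fun j => ?_, fun i => ?_, fun i => ?_⟩
  · rw [eval_combo3 (hC j) a b c x y z (hab.1 j) (hab.2.1 j) (hac.1 j) (hac.2.1 j)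
      (hbc.1 j) (hbc.2.1 j) (hM j)]
    by_cases hj : j.val = 0
    · have : j = ⟨0, hr₃⟩ := Fin.ext hj
      rw [this]
      exact hdiag
    · rw [hKa.1 j hj, hKb.1 j hj, hKc.1 j hj]; ring
  · rw [eval_combo3_quad (hQ i) a b c x y z (hab.2.2 i) (hac.2.2 i) (hbc.2.2 i),
      hKa.2.1 i, hKb.2.1 i, hKc.2.1 i]
    ring
  · rw [eval_combo3_lin (hL i) a b c x y z, hKa.2.2 i, hKb.2.2 i, hKc.2.2 i]
    ring

end CRMain

namespace CRMain
open MvPolynomial CR CR3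

variable {r₃ r₂ r₁ : ℕ} {n : ℕ}
variable {C : Fin r₃ → MvPolynomial (Fin n) ℚ_[3]}
variable {Q : Fin r₂ → MvPolynomial (Fin n) ℚ_[3]}
variable {L : Fin r₁ → MvPolynomial (Fin n) ℚ_[3]}

lemma wrapper (hC : ∀ i, (C i).IsHomogeneous 3) (hQ : ∀ i, (Q i).IsHomogeneous 2)
    (hL : ∀ i, (L i).IsHomogeneous 1)
    (H : ∀ (C' : Fin (r₃ - 1) → MvPolynomial (Fin n) ℚ_[3])
        (Q' : Fin (3 * r₃ + r₂) → MvPolynomial (Fin n) ℚ_[3])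
        (L' : Fin (6 * r₃ + 3 * r₂ + r₁) → MvPolynomial (Fin n) ℚ_[3]),
        (∀ i, (C' i).IsHomogeneous 3) → (∀ i, (Q' i).IsHomogeneous 2) →
        (∀ i, (L' i).IsHomogeneous 1) →
        ∃ x : Fin n → ℚ_[3], x ≠ 0 ∧ (∀ i, eval x (C' i) = 0) ∧
          (∀ i, eval x (Q' i) = 0) ∧ (∀ i, eval x (L' i) = 0))
    (b0 b1 b2 : Fin n → ℚ_[3]) :
    ∃ r, r ≠ 0 ∧ Kill C Q L r ∧ Pp C Q b0 r ∧ Pp C Q b1 r ∧ Pp C Q b2 r ∧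
      Tm C b0 b1 r ∧ Tm C b0 b2 r ∧ Tm C b1 b2 r := by
  classical
  set bb : Fin 3 → (Fin n → ℚ_[3]) := ![b0, b1, b2] with hbb
  set gg : Fin 6 → (Fin n → ℚ_[3]) := ![b0, b1, b2, b0+b1, b0+b2, b1+b2] with hgg
  obtain ⟨x, hx0, hxC, hxQ, hxL⟩ := H
    (fun i => C ⟨i.val + 1, by have := i.isLt; omega⟩)
    (fun e => if h : e.val < 3*r₃ then
        comp 2 (bb ⟨e.val % 3, by omega⟩) (C ⟨e.val / 3, by omega⟩)
      else Q ⟨e.val - 3*r₃, by have := e.isLt; omega⟩)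
    (fun e => if h : e.val < 6*r₃ then
        comp 1 (gg ⟨e.val % 6, by omega⟩) (C ⟨e.val / 6, by omega⟩)
      else if h2 : e.val < 6*r₃ + 3*r₂ then
        comp 1 (bb ⟨(e.val - 6*r₃) % 3, by omega⟩) (Q ⟨(e.val - 6*r₃) / 3, by omega⟩)
      else L ⟨e.val - (6*r₃ + 3*r₂), by have := e.isLt; omega⟩)
    (fun i => hC _)
    (fun e => by
      split
      · exact comp_isHomog _ _ _
      · exact hQ _)
    (fun e => by
      split
      · exact comp_isHomog _ _ _
      · split
        · exact comp_isHomog _ _ _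
        · exact hL _)
  -- extraction of comp2 conditions
  have hcomp2 : ∀ (j : Fin r₃) (s : Fin 3), tri (C j) (bb s) x x = 0 := by
    intro j s
    have hidx : 3 * j.val + s.val < 3*r₃ + r₂ := by
      have := j.isLt; have := s.isLt; omega
    have h := hxQ ⟨3*j.val + s.val, hidx⟩
    dsimp only at h
    rw [dif_pos (show 3*j.val + s.val < 3*r₃ by have := j.isLt; have := s.isLt; omega)] at h
    have key : ∀ (s' : Fin 3) (j' : Fin r₃), s' = s → j' = j →
        eval x (comp 2 (bb s') (C j')) = 0 → tri (C j) (bb s) x x = 0 := by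
      intro s' j' hs' hj' hev
      subst hs'; subst hj'
      have hb := eval_comp2 (hC j') (bb s') x
      rw [hev] at hb
      have h3 : (3:ℚ_[3]) * tri (C j') (bb s') x x = 0 := hb.symm
      rcases mul_eq_zero.mp h3 with h' | h'
      · exact absurd h' (by norm_num)
      · exact h'
    exact key _ _ (Fin.ext (by simp)) (Fin.ext (by simp; omega)) h
  -- extraction of comp1 conditions at the six points
  have hcomp1 : ∀ (j : Fin r₃) (m : Fin 6), tri (C j) (gg m) (gg m) x = 0 := by
    intro j m
    have hidx : 6 * j.val + m.val < 6*r₃ + 3*r₂ + r₁ := by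
      have := j.isLt; have := m.isLt; omega
    have h := hxL ⟨6*j.val + m.val, hidx⟩
    dsimp only at h
    rw [dif_pos (show 6*j.val + m.val < 6*r₃ by have := j.isLt; have := m.isLt; omega)] at h
    have key : ∀ (m' : Fin 6) (j' : Fin r₃), m' = m → j' = j →
        eval x (comp 1 (gg m') (C j')) = 0 → tri (C j) (gg m) (gg m) x = 0 := by
      intro m' j' hm' hj' hev
      subst hm'; subst hj'
      have hb := eval_comp1 (hC j') (gg m') x
      rw [hev] at hb
      have h3 : (3:ℚ_[3]) * tri (C j') (gg m') (gg m') x = 0 := hb.symm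
      rcases mul_eq_zero.mp h3 with h' | h'
      · exact absurd h' (by norm_num)
      · exact h'
    exact key _ _ (Fin.ext (by simp)) (Fin.ext (by simp; omega)) h
  -- extraction of bilinear conditions
  have hbil : ∀ (i : Fin r₂) (s : Fin 3), bil (Q i) (bb s) x = 0 := by
    intro i s
    have hidx : 6*r₃ + (3 * i.val + s.val) < 6*r₃ + 3*r₂ + r₁ := by
      have := i.isLt; have := s.isLt; omega
    have h := hxL ⟨6*r₃ + (3 * i.val + s.val), hidx⟩
    dsimp only at h
    rw [dif_neg (show ¬(6*r₃ + (3*i.val + s.val) < 6*r₃) by omega)] at h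
    rw [dif_pos (show 6*r₃ + (3*i.val + s.val) < 6*r₃ + 3*r₂ by
      have := i.isLt; have := s.isLt; omega)] at h
    have key : ∀ (s' : Fin 3) (i' : Fin r₂), s' = s → i' = i →
        eval x (comp 1 (bb s') (Q i')) = 0 → bil (Q i) (bb s) x = 0 := by
      intro s' i' hs' hi' hev
      subst hs'; subst hi'
      have hb := eval_comp1_quad (hQ i') (bb s') x
      rw [hev] at hb
      have h2 : (2:ℚ_[3]) * bil (Q i') (bb s') x = 0 := hb.symm
      rcases mul_eq_zero.mp h2 with h' | h'
      · exact absurd h' (by norm_num)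
      · exact h'
    exact key _ _ (Fin.ext (by simp)) (Fin.ext (by simp; omega)) h
  -- original forms vanish
  have hkill : Kill C Q L x := by
    refine ⟨fun j hj => ?_, fun i => ?_, fun i => ?_⟩
    · have hidx : j.val - 1 < r₃ - 1 := by have := j.isLt; omega
      have h := hxC ⟨j.val - 1, hidx⟩
      have : (⟨(j.val - 1) + 1, by have := j.isLt; omega⟩ : Fin r₃) = j :=
        Fin.ext (by simp; omega)
      rwa [this] at h
    · have hidx : 3*r₃ + i.val < 3*r₃ + r₂ := by have := i.isLt; omega
      have h := hxQ ⟨3*r₃ + i.val, hidx⟩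
      dsimp only at h
      rw [dif_neg (show ¬(3*r₃ + i.val < 3*r₃) by omega)] at h
      have : (⟨3*r₃ + i.val - 3*r₃, by have := i.isLt; omega⟩ : Fin r₂) = i :=
        Fin.ext (by simp)
      rwa [this] at h
    · have hidx : 6*r₃ + 3*r₂ + i.val < 6*r₃ + 3*r₂ + r₁ := by have := i.isLt; omega
      have h := hxL ⟨6*r₃ + 3*r₂ + i.val, hidx⟩
      dsimp only at h
      rw [dif_neg (show ¬(6*r₃ + 3*r₂ + i.val < 6*r₃) by omega)] at h
      rw [dif_neg (show ¬(6*r₃ + 3*r₂ + i.val < 6*r₃ + 3*r₂) by omega)] at h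
      have : (⟨6*r₃ + 3*r₂ + i.val - (6*r₃ + 3*r₂), by have := i.isLt; omega⟩ : Fin r₁) = i :=
        Fin.ext (by simp)
      rwa [this] at h
  -- base point identifications
  have hbb0 : bb 0 = b0 := rfl
  have hbb1 : bb 1 = b1 := rfl
  have hbb2 : bb 2 = b2 := rfl
  have hgg0 : gg 0 = b0 := rfl
  have hgg1 : gg 1 = b1 := rfl
  have hgg2 : gg 2 = b2 := rfl
  have hgg3 : gg 3 = b0 + b1 := rfl
  have hgg4 : gg 4 = b0 + b2 := rfl
  have hgg5 : gg 5 = b1 + b2 := rfl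
  have hP0 : Pp C Q b0 x := by
    refine ⟨fun j => ?_, fun j => ?_, fun i => ?_⟩
    · rw [← hgg0]; exact hcomp1 j 0
    · rw [← hbb0]; exact hcomp2 j 0
    · rw [← hbb0]; exact hbil i 0
  have hP1 : Pp C Q b1 x := by
    refine ⟨fun j => ?_, fun j => ?_, fun i => ?_⟩
    · rw [← hgg1]; exact hcomp1 j 1
    · rw [← hbb1]; exact hcomp2 j 1
    · rw [← hbb1]; exact hbil i 1
  have hP2 : Pp C Q b2 x := by
    refine ⟨fun j => ?_, fun j => ?_, fun i => ?_⟩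
    · rw [← hgg2]; exact hcomp1 j 2
    · rw [← hbb2]; exact hcomp2 j 2
    · rw [← hbb2]; exact hbil i 2
  refine ⟨x, hx0, hkill, hP0, hP1, hP2, fun j => ?_, fun j => ?_, fun j => ?_⟩
  · exact mixed_of_sums (hC j) (hP0.1 j) (hP1.1 j) (by rw [← hgg3]; exact hcomp1 j 3)
  · exact mixed_of_sums (hC j) (hP0.1 j) (hP2.1 j) (by rw [← hgg4]; exact hcomp1 j 4)
  · exact mixed_of_sums (hC j) (hP1.1 j) (hP2.1 j) (by rw [← hgg5]; exact hcomp1 j 5)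

end CRMain

namespace CRMain
open MvPolynomial CR CR3

variable {r₃ r₂ r₁ : ℕ} {n : ℕ}
variable {C : Fin r₃ → MvPolynomial (Fin n) ℚ_[3]}
variable {Q : Fin r₂ → MvPolynomial (Fin n) ℚ_[3]}
variable {L : Fin r₁ → MvPolynomial (Fin n) ℚ_[3]}

def Sol (C : Fin r₃ → MvPolynomial (Fin n) ℚ_[3]) (Q : Fin r₂ → MvPolynomial (Fin n) ℚ_[3])
    (L : Fin r₁ → MvPolynomial (Fin n) ℚ_[3]) : Prop :=
  ∃ x : Fin n → ℚ_[3], x ≠ 0 ∧ (∀ i, eval x (C i) = 0) ∧ (∀ i, eval x (Q i) = 0) ∧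
    (∀ i, eval x (L i) = 0)

lemma win1 (hC : ∀ i, (C i).IsHomogeneous 3) (hQ : ∀ i, (Q i).IsHomogeneous 2)
    (hL : ∀ i, (L i).IsHomogeneous 1) (hr₃ : 0 < r₃) {a : Fin n → ℚ_[3]}
    (ha : a ≠ 0) (hK : Kill C Q L a) (h0 : eval a (C ⟨0, hr₃⟩) = 0) : Sol C Q L := by
  refine ⟨a, ha, fun j => ?_, hK.2.1, hK.2.2⟩
  by_cases hj : j.val = 0
  · have : j = ⟨0, hr₃⟩ := Fin.ext hj
    rw [this]; exact h0
  · exact hK.1 j hj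

lemma win2 (hC : ∀ i, (C i).IsHomogeneous 3) (hQ : ∀ i, (Q i).IsHomogeneous 2)
    (hL : ∀ i, (L i).IsHomogeneous 1) (hr₃ : 0 < r₃) {a b : Fin n → ℚ_[3]}
    (hKa : Kill C Q L a) (hKb : Kill C Q L b) (hab : Pp C Q a b)
    (hga : eval a (C ⟨0, hr₃⟩) ≠ 0) (hgb : eval b (C ⟨0, hr₃⟩) ≠ 0)
    {x y : ℚ_[3]} (hne : ¬(x = 0 ∧ y = 0))
    (hdiag : eval a (C ⟨0, hr₃⟩) * x^3 + eval b (C ⟨0, hr₃⟩) * y^3 = 0) : Sol C Q L := by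
  have hac := Pp_zero_right C Q hC hQ a
  have hbc := Pp_zero_right C Q hC hQ b
  have hM := Tm_zero_right C hC a b
  have hvne : x • a + y • b + (0:ℚ_[3]) • (0 : Fin n → ℚ_[3]) ≠ 0 := by
    apply combo_ne_zero (hC ⟨0, hr₃⟩) a b 0 x y 0 (hab.1 _) (hab.2.1 _) (hac.1 _) (hac.2.1 _)
      (hbc.1 _) (hbc.2.1 _) (hM _) (fun _ => hga) (fun _ => hgb)
      (fun h => absurd rfl h)
    intro ⟨h1, h2, _⟩; exact hne ⟨h1, h2⟩
  exact finishW C Q L hC hQ hL hr₃ hab hac hbc hM hKa hKb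
    (Kill_zero C Q L hC hQ hL) (by linear_combination hdiag) hvne

lemma win3 (hC : ∀ i, (C i).IsHomogeneous 3) (hQ : ∀ i, (Q i).IsHomogeneous 2)
    (hL : ∀ i, (L i).IsHomogeneous 1) (hr₃ : 0 < r₃) {a b c : Fin n → ℚ_[3]}
    (hKa : Kill C Q L a) (hKb : Kill C Q L b) (hKc : Kill C Q L c)
    (hab : Pp C Q a b) (hac : Pp C Q a c) (hbc : Pp C Q b c) (hM : Tm C a b c)
    (hga : eval a (C ⟨0, hr₃⟩) ≠ 0) (hgb : eval b (C ⟨0, hr₃⟩) ≠ 0)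
    (hgc : eval c (C ⟨0, hr₃⟩) ≠ 0)
    {x y z : ℚ_[3]} (hne : ¬(x = 0 ∧ y = 0 ∧ z = 0))
    (hdiag : eval a (C ⟨0, hr₃⟩) * x^3 + eval b (C ⟨0, hr₃⟩) * y^3
      + eval c (C ⟨0, hr₃⟩) * z^3 = 0) : Sol C Q L := by
  have hvne : x • a + y • b + z • c ≠ 0 :=
    combo_ne_zero (hC ⟨0, hr₃⟩) a b c x y z (hab.1 _) (hab.2.1 _) (hac.1 _) (hac.2.1 _)
      (hbc.1 _) (hbc.2.1 _) (hM _) (fun _ => hga) (fun _ => hgb) (fun _ => hgc) hne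
  exact finishW C Q L hC hQ hL hr₃ hab hac hbc hM hKa hKb hKc
    (by linear_combination hdiag) hvne

end CRMain

namespace CRMain
open MvPolynomial CR CR3

variable {r₃ r₂ r₁ : ℕ} {n : ℕ}
variable {C : Fin r₃ → MvPolynomial (Fin n) ℚ_[3]}
variable {Q : Fin r₂ → MvPolynomial (Fin n) ℚ_[3]}
variable {L : Fin r₁ → MvPolynomial (Fin n) ℚ_[3]}

lemma hard (hC : ∀ i, (C i).IsHomogeneous 3) (hQ : ∀ i, (Q i).IsHomogeneous 2)
    (hL : ∀ i, (L i).IsHomogeneous 1) (hr₃ : 0 < r₃)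
    (H : ∀ (C' : Fin (r₃ - 1) → MvPolynomial (Fin n) ℚ_[3])
        (Q' : Fin (3 * r₃ + r₂) → MvPolynomial (Fin n) ℚ_[3])
        (L' : Fin (6 * r₃ + 3 * r₂ + r₁) → MvPolynomial (Fin n) ℚ_[3]),
        (∀ i, (C' i).IsHomogeneous 3) → (∀ i, (Q' i).IsHomogeneous 2) →
        (∀ i, (L' i).IsHomogeneous 1) →
        ∃ x : Fin n → ℚ_[3], x ≠ 0 ∧ (∀ i, eval x (C' i) = 0) ∧
          (∀ i, eval x (Q' i) = 0) ∧ (∀ i, eval x (L' i) = 0))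
    {a b c d : Fin n → ℚ_[3]}
    {ka kb kc kd : ℤ} {ua ub uc ud : ℚ_[3]} {ta tb tc td : ℕ}
    (hKa : Kill C Q L a) (hKb : Kill C Q L b) (hKc : Kill C Q L c) (hKd : Kill C Q L d)
    (hab : Pp C Q a b) (hac : Pp C Q a c) (had : Pp C Q a d) (hbc : Pp C Q b c)
    (hbd : Pp C Q b d) (hcd : Pp C Q c d)
    (hTabc : Tm C a b c) (hTabd : Tm C a b d)
    (hdeca : eval a (C ⟨0, hr₃⟩) = (3:ℚ_[3])^ka * ua) (hua : ‖ua‖ = 1) (hta9 : ta < 9)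
    (hta3 : ta % 3 ≠ 0) (happa : ‖ua - ((ta:ℤ):ℚ_[3])‖ ≤ 1/9)
    (hdecb : eval b (C ⟨0, hr₃⟩) = (3:ℚ_[3])^kb * ub) (hub : ‖ub‖ = 1) (htb9 : tb < 9)
    (htb3 : tb % 3 ≠ 0) (happb : ‖ub - ((tb:ℤ):ℚ_[3])‖ ≤ 1/9)
    (hdecc : eval c (C ⟨0, hr₃⟩) = (3:ℚ_[3])^kc * uc) (huc : ‖uc‖ = 1) (htc9 : tc < 9)
    (htc3 : tc % 3 ≠ 0) (happc : ‖uc - ((tc:ℤ):ℚ_[3])‖ ≤ 1/9)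
    (hdecd : eval d (C ⟨0, hr₃⟩) = (3:ℚ_[3])^kd * ud) (hud : ‖ud‖ = 1) (htd9 : td < 9)
    (htd3 : td % 3 ≠ 0) (happd : ‖ud - ((td:ℤ):ℚ_[3])‖ ≤ 1/9)
    (hk_b : (kb - ka) % 3 = 0) (hk_c : (kc - ka) % 3 = 0) (hk_d : (kd - ka) % 3 = 2)
    (hrel : ¬ rel9 ta tb) : Sol C Q L := by
  obtain ⟨lam, u', hu', hδ⟩ := arith_levelup hdeca hua hta9 hta3 happa hdecb hub htb9 htb3
    happb hk_b hrel
  set q := a + lam • b with hq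
  have hγq : eval q (C ⟨0, hr₃⟩) = (3:ℚ_[3])^(ka+1) * u' := by
    rw [hq, eval0_combo C Q hC _ hab]
    exact hδ
  obtain ⟨tq, htq9, htq3, happq⟩ := unit_approx hu'
  have hγqne : eval q (C ⟨0, hr₃⟩) ≠ 0 := dec_ne_zero hγq hu'
  have hγcne : eval c (C ⟨0, hr₃⟩) ≠ 0 := dec_ne_zero hdecc huc
  have hγdne : eval d (C ⟨0, hr₃⟩) ≠ 0 := dec_ne_zero hdecd hud
  have hKq : Kill C Q L q := Kill_combo C Q L hC hQ hL hKa hKb hab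
  have hPqc : Pp C Q q c := Pp_combo C Q hC hQ hab hac hbc hTabc
  have hPqd : Pp C Q q d := Pp_combo C Q hC hQ hab had hbd hTabd
  obtain ⟨w, hw0, hKw, hPqw, hPcw, hPdw, hTqcw, hTqdw, hTcdw⟩ := wrapper hC hQ hL H q c d
  by_cases hgw : eval w (C ⟨0, hr₃⟩) = 0
  · exact win1 hC hQ hL hr₃ hw0 hKw hgw
  obtain ⟨kw, uw, tw, hdecw, huw, htw9, htw3, happw⟩ := CR3.decomp hgw
  have hγwne : eval w (C ⟨0, hr₃⟩) ≠ 0 := hgw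
  have hd3 : (kw - ka) % 3 = 0 ∨ (kw - ka) % 3 = 1 ∨ (kw - ka) % 3 = 2 := by omega
  rcases hd3 with h | h | h
  · -- triple (c, w, q) with levels (0,0,1)
    obtain ⟨x, y, z, hne, hdiag⟩ := arith_triple hdecc huc htc9 htc3 happc hdecw huw htw9
      htw3 happw hγq hu' htq9 htq3 happq (by omega) (by omega)
    exact win3 hC hQ hL hr₃ hKc hKw hKq hPcw (Pp_symm C Q hPqc) (Pp_symm C Q hPqw)
      (fun j => by rw [← tri_rot]; exact hTqcw j) hγcne hγwne hγqne hne hdiag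
  · -- triple (q, w, d) with levels (0,0,1) relative to ka+1
    obtain ⟨x, y, z, hne, hdiag⟩ := arith_triple hγq hu' htq9 htq3 happq hdecw huw htw9
      htw3 happw hdecd hud htd9 htd3 happd (by omega) (by omega)
    exact win3 hC hQ hL hr₃ hKq hKw hKd hPqw hPqd (Pp_symm C Q hPdw)
      (fun j => by rw [tri_symm23]; exact hTqdw j) hγqne hγwne hγdne hne hdiag
  · -- triple (d, w, c) with levels (0,0,1) relative to kd
    obtain ⟨x, y, z, hne, hdiag⟩ := arith_triple hdecd hud htd9 htd3 happd hdecw huw htw9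
      htw3 happw hdecc huc htc9 htc3 happc (by omega) (by omega)
    exact win3 hC hQ hL hr₃ hKd hKw hKc hPdw (Pp_symm C Q hcd) (Pp_symm C Q hPcw)
      (fun j => by rw [← tri_rot]; exact hTcdw j) hγdne hγwne hγcne hne hdiag

end CRMain

namespace CRMain
open MvPolynomial CR CR3

variable {r₃ r₂ r₁ : ℕ} {n : ℕ}
variable {C : Fin r₃ → MvPolynomial (Fin n) ℚ_[3]}
variable {Q : Fin r₂ → MvPolynomial (Fin n) ℚ_[3]}
variable {L : Fin r₁ → MvPolynomial (Fin n) ℚ_[3]}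

lemma winpair (hC : ∀ i, (C i).IsHomogeneous 3) (hQ : ∀ i, (Q i).IsHomogeneous 2)
    (hL : ∀ i, (L i).IsHomogeneous 1) (hr₃ : 0 < r₃) {a b : Fin n → ℚ_[3]}
    (hKa : Kill C Q L a) (hKb : Kill C Q L b) (hab : Pp C Q a b)
    {ka kb : ℤ} {ua ub : ℚ_[3]} {ta tb : ℕ}
    (hdeca : eval a (C ⟨0, hr₃⟩) = (3:ℚ_[3])^ka * ua) (hua : ‖ua‖ = 1) (hta9 : ta < 9)
    (hta3 : ta % 3 ≠ 0) (happa : ‖ua - ((ta:ℤ):ℚ_[3])‖ ≤ 1/9)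
    (hdecb : eval b (C ⟨0, hr₃⟩) = (3:ℚ_[3])^kb * ub) (hub : ‖ub‖ = 1) (htb9 : tb < 9)
    (htb3 : tb % 3 ≠ 0) (happb : ‖ub - ((tb:ℤ):ℚ_[3])‖ ≤ 1/9)
    (hk : (kb - ka) % 3 = 0) (hrel : rel9 ta tb) : Sol C Q L := by
  obtain ⟨c, hc⟩ := arith_pair hdeca hua hta9 hta3 happa hdecb hub htb9 htb3 happb hk hrel
  exact win2 hC hQ hL hr₃ hKa hKb hab (dec_ne_zero hdeca hua) (dec_ne_zero hdecb hub)
    (x := c) (y := 1) (fun h => one_ne_zero h.2) (by linear_combination hc)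

lemma wintrip (hC : ∀ i, (C i).IsHomogeneous 3) (hQ : ∀ i, (Q i).IsHomogeneous 2)
    (hL : ∀ i, (L i).IsHomogeneous 1) (hr₃ : 0 < r₃) {a b c : Fin n → ℚ_[3]}
    (hKa : Kill C Q L a) (hKb : Kill C Q L b) (hKc : Kill C Q L c)
    (hab : Pp C Q a b) (hac : Pp C Q a c) (hbc : Pp C Q b c) (hM : Tm C a b c)
    {ka kb kc : ℤ} {ua ub uc : ℚ_[3]} {ta tb tc : ℕ}
    (hdeca : eval a (C ⟨0, hr₃⟩) = (3:ℚ_[3])^ka * ua) (hua : ‖ua‖ = 1) (hta9 : ta < 9)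
    (hta3 : ta % 3 ≠ 0) (happa : ‖ua - ((ta:ℤ):ℚ_[3])‖ ≤ 1/9)
    (hdecb : eval b (C ⟨0, hr₃⟩) = (3:ℚ_[3])^kb * ub) (hub : ‖ub‖ = 1) (htb9 : tb < 9)
    (htb3 : tb % 3 ≠ 0) (happb : ‖ub - ((tb:ℤ):ℚ_[3])‖ ≤ 1/9)
    (hdecc : eval c (C ⟨0, hr₃⟩) = (3:ℚ_[3])^kc * uc) (huc : ‖uc‖ = 1) (htc9 : tc < 9)
    (htc3 : tc % 3 ≠ 0) (happc : ‖uc - ((tc:ℤ):ℚ_[3])‖ ≤ 1/9)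
    (hk1 : (kb - ka) % 3 = 0) (hk2 : (kc - ka) % 3 = 1) : Sol C Q L := by
  obtain ⟨x, y, z, hne, hdiag⟩ := arith_triple hdeca hua hta9 hta3 happa hdecb hub htb9 htb3
    happb hdecc huc htc9 htc3 happc hk1 hk2
  exact win3 hC hQ hL hr₃ hKa hKb hKc hab hac hbc hM (dec_ne_zero hdeca hua)
    (dec_ne_zero hdecb hub) (dec_ne_zero hdecc huc) hne hdiag

lemma pairB (hC : ∀ i, (C i).IsHomogeneous 3) (hQ : ∀ i, (Q i).IsHomogeneous 2)
    (hL : ∀ i, (L i).IsHomogeneous 1) (hr₃ : 0 < r₃)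
    (H : ∀ (C' : Fin (r₃ - 1) → MvPolynomial (Fin n) ℚ_[3])
        (Q' : Fin (3 * r₃ + r₂) → MvPolynomial (Fin n) ℚ_[3])
        (L' : Fin (6 * r₃ + 3 * r₂ + r₁) → MvPolynomial (Fin n) ℚ_[3]),
        (∀ i, (C' i).IsHomogeneous 3) → (∀ i, (Q' i).IsHomogeneous 2) →
        (∀ i, (L' i).IsHomogeneous 1) →
        ∃ x : Fin n → ℚ_[3], x ≠ 0 ∧ (∀ i, eval x (C' i) = 0) ∧
          (∀ i, eval x (Q' i) = 0) ∧ (∀ i, eval x (L' i) = 0))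
    {e f : Fin n → ℚ_[3]}
    (hKe : Kill C Q L e) (hKf : Kill C Q L f) (hef : Pp C Q e f)
    {ke kf : ℤ} {ue uf : ℚ_[3]} {te tf : ℕ}
    (hdece : eval e (C ⟨0, hr₃⟩) = (3:ℚ_[3])^ke * ue) (hue : ‖ue‖ = 1) (hte9 : te < 9)
    (hte3 : te % 3 ≠ 0) (happe : ‖ue - ((te:ℤ):ℚ_[3])‖ ≤ 1/9)
    (hdecf : eval f (C ⟨0, hr₃⟩) = (3:ℚ_[3])^kf * uf) (huf : ‖uf‖ = 1) (htf9 : tf < 9)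
    (htf3 : tf % 3 ≠ 0) (happf : ‖uf - ((tf:ℤ):ℚ_[3])‖ ≤ 1/9)
    (hk : (kf - ke) % 3 = 1) : Sol C Q L := by
  obtain ⟨g, hg0', hKg, hPeg, hPfg, _, hTefg, _, _⟩ := wrapper hC hQ hL H e f f
  by_cases hgg : eval g (C ⟨0, hr₃⟩) = 0
  · exact win1 hC hQ hL hr₃ hg0' hKg hgg
  obtain ⟨kg, ug, tg, hdg, hug, hg9, hg3, hag⟩ := CR3.decomp hgg
  have hcase : (kg - ke) % 3 = 0 ∨ (kg - ke) % 3 = 1 ∨ (kg - ke) % 3 = 2 := by omega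
  rcases hcase with hDg | hDg | hDg
  · -- (e, g, f) levels (0,0,1)
    exact wintrip hC hQ hL hr₃ hKe hKg hKf hPeg hef (Pp_symm C Q hPfg)
      (fun j => by rw [tri_symm23]; exact hTefg j)
      hdece hue hte9 hte3 happe hdg hug hg9 hg3 hag hdecf huf htf9 htf3 happf
      hDg hk
  · -- two at level 1 : f and g
    by_cases hrelfg : rel9 tf tg
    · exact winpair hC hQ hL hr₃ hKf hKg hPfg hdecf huf htf9 htf3 happf hdg hug hg9 hg3 hag
        (by omega) hrelfg
    obtain ⟨p, hp0', hKp, hPep, hPfp, hPgp, hTefp, hTegp, hTfgp⟩ := wrapper hC hQ hL H e f g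
    by_cases hgp : eval p (C ⟨0, hr₃⟩) = 0
    · exact win1 hC hQ hL hr₃ hp0' hKp hgp
    obtain ⟨kp, up, tp, hdp, hup, hp9, hp3, hap⟩ := CR3.decomp hgp
    have hcase2 : (kp - ke) % 3 = 0 ∨ (kp - ke) % 3 = 1 ∨ (kp - ke) % 3 = 2 := by omega
    rcases hcase2 with hDp | hDp | hDp
    · -- (e, p, f)
      exact wintrip hC hQ hL hr₃ hKe hKp hKf hPep hef (Pp_symm C Q hPfp)
        (fun j => by rw [tri_symm23]; exact hTefp j)
        hdece hue hte9 hte3 happe hdp hup hp9 hp3 hap hdecf huf htf9 htf3 happf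
        hDp hk
    · -- HARD (f, g, p ; e)
      exact hard hC hQ hL hr₃ H hKf hKg hKp hKe hPfg hPfp (Pp_symm C Q hef) hPgp
        (Pp_symm C Q hPeg) (Pp_symm C Q hPep) hTfgp
        (fun j => by rw [← tri_rot]; exact hTefg j)
        hdecf huf htf9 htf3 happf hdg hug hg9 hg3 hag hdp hup hp9 hp3 hap
        hdece hue hte9 hte3 happe (by omega) (by omega) (by omega) hrelfg
    · -- (f, g, p) levels (0,0,1) relative to kf
      exact wintrip hC hQ hL hr₃ hKf hKg hKp hPfg hPfp hPgp hTfgp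
        hdecf huf htf9 htf3 happf hdg hug hg9 hg3 hag hdp hup hp9 hp3 hap
        (by omega) (by omega)
  · -- levels all distinct : e, f, g at (0,1,2)
    obtain ⟨p, hp0', hKp, hPep, hPfp, hPgp, hTefp, hTegp, hTfgp⟩ := wrapper hC hQ hL H e f g
    by_cases hgp : eval p (C ⟨0, hr₃⟩) = 0
    · exact win1 hC hQ hL hr₃ hp0' hKp hgp
    obtain ⟨kp, up, tp, hdp, hup, hp9, hp3, hap⟩ := CR3.decomp hgp
    have hcase2 : (kp - ke) % 3 = 0 ∨ (kp - ke) % 3 = 1 ∨ (kp - ke) % 3 = 2 := by omega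
    rcases hcase2 with hDp | hDp | hDp
    · -- (e, p, f)
      exact wintrip hC hQ hL hr₃ hKe hKp hKf hPep hef (Pp_symm C Q hPfp)
        (fun j => by rw [tri_symm23]; exact hTefp j)
        hdece hue hte9 hte3 happe hdp hup hp9 hp3 hap hdecf huf htf9 htf3 happf
        hDp hk
    · -- (f, p, g)
      exact wintrip hC hQ hL hr₃ hKf hKp hKg hPfp hPfg (Pp_symm C Q hPgp)
        (fun j => by rw [tri_symm23]; exact hTfgp j)
        hdecf huf htf9 htf3 happf hdp hup hp9 hp3 hap hdg hug hg9 hg3 hag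
        (by omega) (by omega)
    · -- (g, p, e)
      exact wintrip hC hQ hL hr₃ hKg hKp hKe hPgp (Pp_symm C Q hPeg) (Pp_symm C Q hPep)
        (fun j => by rw [← tri_rot]; exact hTegp j)
        hdg hug hg9 hg3 hag hdp hup hp9 hp3 hap hdece hue hte9 hte3 happe
        (by omega) (by omega)

end CRMain

open MvPolynomial CR CR3 CRMain in
/-- Reduction V(r₃, r₂, r₁; 3) ≤ V(r₃ - 1, 3r₃ + r₂, 6r₃ + 3r₂ + r₁; 3). -/
theorem cubic_reduction_p_three (r₃ r₂ r₁ : ℕ) (hr₃ : 1 ≤ r₃) (N : ℕ)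
    (H : ∀ n : ℕ, n > N →
      ∀ (C : Fin (r₃ - 1) → MvPolynomial (Fin n) ℚ_[3])
        (Q : Fin (3 * r₃ + r₂) → MvPolynomial (Fin n) ℚ_[3])
        (L : Fin (6 * r₃ + 3 * r₂ + r₁) → MvPolynomial (Fin n) ℚ_[3]),
        (∀ i, (C i).IsHomogeneous 3) → (∀ i, (Q i).IsHomogeneous 2) →
        (∀ i, (L i).IsHomogeneous 1) →
        ∃ x : Fin n → ℚ_[3], x ≠ 0 ∧ (∀ i, MvPolynomial.eval x (C i) = 0) ∧
          (∀ i, MvPolynomial.eval x (Q i) = 0) ∧ (∀ i, MvPolynomial.eval x (L i) = 0)) :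
    ∀ n : ℕ, n > N →
      ∀ (C : Fin r₃ → MvPolynomial (Fin n) ℚ_[3])
        (Q : Fin r₂ → MvPolynomial (Fin n) ℚ_[3])
        (L : Fin r₁ → MvPolynomial (Fin n) ℚ_[3]),
        (∀ i, (C i).IsHomogeneous 3) → (∀ i, (Q i).IsHomogeneous 2) →
        (∀ i, (L i).IsHomogeneous 1) →
        ∃ x : Fin n → ℚ_[3], x ≠ 0 ∧ (∀ i, MvPolynomial.eval x (C i) = 0) ∧
          (∀ i, MvPolynomial.eval x (Q i) = 0) ∧ (∀ i, MvPolynomial.eval x (L i) = 0) := by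
  intro n hn C Q L hC hQ hL
  have hr0 : 0 < r₃ := hr₃
  have Hn := H n hn
  show Sol C Q L
  obtain ⟨p0, hp00, hK0, _, _, _, _, _, _⟩ := wrapper hC hQ hL Hn 0 0 0
  by_cases hg0 : eval p0 (C ⟨0, hr0⟩) = 0
  · exact win1 hC hQ hL hr0 hp00 hK0 hg0
  obtain ⟨k0, u0, t0, hd0, hu0, h09, h03, ha0⟩ := CR3.decomp hg0
  obtain ⟨p1, hp10, hK1, hP01, _, _, _, _, _⟩ := wrapper hC hQ hL Hn p0 p0 p0
  by_cases hg1 : eval p1 (C ⟨0, hr0⟩) = 0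
  · exact win1 hC hQ hL hr0 hp10 hK1 hg1
  obtain ⟨k1, u1, t1, hd1, hu1, h19, h13, ha1⟩ := CR3.decomp hg1
  have hdd1 : (k1-k0)%3 = 0 ∨ (k1-k0)%3 = 1 ∨ (k1-k0)%3 = 2 := by omega
  rcases hdd1 with hD | hD | hD
  · -- p0, p1 at the same level
    by_cases hrel01 : rel9 t0 t1
    · exact winpair hC hQ hL hr0 hK0 hK1 hP01 hd0 hu0 h09 h03 ha0 hd1 hu1 h19 h13 ha1 hD hrel01
    obtain ⟨p2, hp20, hK2, hP02, hP12, _, hT012, _, _⟩ := wrapper hC hQ hL Hn p0 p1 p1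
    by_cases hg2 : eval p2 (C ⟨0, hr0⟩) = 0
    · exact win1 hC hQ hL hr0 hp20 hK2 hg2
    obtain ⟨k2, u2, t2, hd2, hu2, h29, h23, ha2⟩ := CR3.decomp hg2
    have hdd2 : (k2-k0)%3 = 0 ∨ (k2-k0)%3 = 1 ∨ (k2-k0)%3 = 2 := by omega
    rcases hdd2 with hD2 | hD2 | hD2
    · -- three at the same level
      by_cases hrel02 : rel9 t0 t2
      · exact winpair hC hQ hL hr0 hK0 hK2 hP02 hd0 hu0 h09 h03 ha0 hd2 hu2 h29 h23 ha2
          hD2 hrel02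
      by_cases hrel12 : rel9 t1 t2
      · exact winpair hC hQ hL hr0 hK1 hK2 hP12 hd1 hu1 h19 h13 ha1 hd2 hu2 h29 h23 ha2
          (by omega) hrel12
      obtain ⟨p3, hp30, hK3, hP03, hP13, hP23, hT013, hT023, hT123⟩ :=
        wrapper hC hQ hL Hn p0 p1 p2
      by_cases hg3 : eval p3 (C ⟨0, hr0⟩) = 0
      · exact win1 hC hQ hL hr0 hp30 hK3 hg3
      obtain ⟨k3, u3, t3, hd3, hu3, h39, h33, ha3⟩ := CR3.decomp hg3
      have hdd3 : (k3-k0)%3 = 0 ∨ (k3-k0)%3 = 1 ∨ (k3-k0)%3 = 2 := by omega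
      rcases hdd3 with hD3 | hD3 | hD3
      · -- four at the same level: pigeonhole
        rcases pigeon_dec t0 (mem6 h09 h03) t1 (mem6 h19 h13) t2 (mem6 h29 h23) t3
            (mem6 h39 h33) hrel01 hrel02 hrel12 with h | h | h
        · exact winpair hC hQ hL hr0 hK0 hK3 hP03 hd0 hu0 h09 h03 ha0 hd3 hu3 h39 h33 ha3
            hD3 h
        · exact winpair hC hQ hL hr0 hK1 hK3 hP13 hd1 hu1 h19 h13 ha1 hd3 hu3 h39 h33 ha3
            (by omega) h
        · exact winpair hC hQ hL hr0 hK2 hK3 hP23 hd2 hu2 h29 h23 ha2 hd3 hu3 h39 h33 ha3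
            (by omega) h
      · -- (p0, p1, p3) is a (0,0,1) triple
        exact wintrip hC hQ hL hr0 hK0 hK1 hK3 hP01 hP03 hP13 hT013
          hd0 hu0 h09 h03 ha0 hd1 hu1 h19 h13 ha1 hd3 hu3 h39 h33 ha3 hD hD3
      · -- HARD: p0 p1 p2 at level 0, p3 at level 2
        exact hard hC hQ hL hr0 Hn hK0 hK1 hK2 hK3 hP01 hP02 hP03 hP12 hP13 hP23 hT012 hT013
          hd0 hu0 h09 h03 ha0 hd1 hu1 h19 h13 ha1 hd2 hu2 h29 h23 ha2 hd3 hu3 h39 h33 ha3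
          hD hD2 hD3 hrel01
    · -- (p0, p1, p2) is a (0,0,1) triple
      exact wintrip hC hQ hL hr0 hK0 hK1 hK2 hP01 hP02 hP12 hT012
        hd0 hu0 h09 h03 ha0 hd1 hu1 h19 h13 ha1 hd2 hu2 h29 h23 ha2 hD hD2
    · -- p0 p1 at level 0, p2 at level 2
      obtain ⟨p3, hp30, hK3, hP03, hP13, hP23, hT013, hT023, hT123⟩ :=
        wrapper hC hQ hL Hn p0 p1 p2
      by_cases hg3 : eval p3 (C ⟨0, hr0⟩) = 0
      · exact win1 hC hQ hL hr0 hp30 hK3 hg3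
      obtain ⟨k3, u3, t3, hd3, hu3, h39, h33, ha3⟩ := CR3.decomp hg3
      have hdd3 : (k3-k0)%3 = 0 ∨ (k3-k0)%3 = 1 ∨ (k3-k0)%3 = 2 := by omega
      rcases hdd3 with hD3 | hD3 | hD3
      · -- p3 at level 0
        by_cases hrel03 : rel9 t0 t3
        · exact winpair hC hQ hL hr0 hK0 hK3 hP03 hd0 hu0 h09 h03 ha0 hd3 hu3 h39 h33 ha3
            hD3 hrel03
        by_cases hrel13 : rel9 t1 t3
        · exact winpair hC hQ hL hr0 hK1 hK3 hP13 hd1 hu1 h19 h13 ha1 hd3 hu3 h39 h33 ha3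
            (by omega) hrel13
        · -- HARD: p0 p1 p3 at level 0, p2 at level 2
          exact hard hC hQ hL hr0 Hn hK0 hK1 hK3 hK2 hP01 hP03 hP02 hP13 hP12
            (Pp_symm C Q hP23) hT013 hT012
            hd0 hu0 h09 h03 ha0 hd1 hu1 h19 h13 ha1 hd3 hu3 h39 h33 ha3
            hd2 hu2 h29 h23 ha2 hD hD3 hD2 hrel01
      · -- (p0, p1, p3) is a (0,0,1) triple
        exact wintrip hC hQ hL hr0 hK0 hK1 hK3 hP01 hP03 hP13 hT013
          hd0 hu0 h09 h03 ha0 hd1 hu1 h19 h13 ha1 hd3 hu3 h39 h33 ha3 hD hD3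
      · -- p2 p3 at level 2
        by_cases hrel23 : rel9 t2 t3
        · exact winpair hC hQ hL hr0 hK2 hK3 hP23 hd2 hu2 h29 h23 ha2 hd3 hu3 h39 h33 ha3
            (by omega) hrel23
        · -- (p2, p3, p0) is a (0,0,1) triple relative to k2
          exact wintrip hC hQ hL hr0 hK2 hK3 hK0 hP23 (Pp_symm C Q hP02) (Pp_symm C Q hP03)
            (fun j => by rw [← tri_rot]; exact hT023 j)
            hd2 hu2 h29 h23 ha2 hd3 hu3 h39 h33 ha3 hd0 hu0 h09 h03 ha0
            (by omega) (by omega)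
  · -- p1 one level above p0
    exact pairB hC hQ hL hr0 Hn hK0 hK1 hP01 hd0 hu0 h09 h03 ha0 hd1 hu1 h19 h13 ha1 hD
  · -- p0 one level above p1
    exact pairB hC hQ hL hr0 Hn hK1 hK0 (Pp_symm C Q hP01) hd1 hu1 h19 h13 ha1
      hd0 hu0 h09 h03 ha0 (by omega)
end

section
/- Let a, b, c, d, e ∈ ℚ₂ be elements whose 2-adic valuations satisfy ν(a) = 0, ν(b) = 1, ν(c) = 2, ν(d) = 3 and ν(e) = 0. Then the diagonal quartic form a·x₁⁴ + b·x₂⁴ + c·x₃⁴ + d·x₄⁴ + e·x₅⁴ has a nontrivial zero over ℚ₂, i.e., there exist x₁, ..., x₅ ∈ ℚ₂, not all zero, with a·x₁⁴ + b·x₂⁴ + c·x₃⁴ + d·x₄⁴ + e·x₅⁴ = 0. -/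
open Polynomial

lemma norm_four : ‖(4 : ℤ_[2])‖ = 1/4 := by
  have : ((4 : ℤ_[2])) = (2 : ℤ_[2])^2 := by norm_num
  rw [this]
  have := PadicInt.norm_p_pow (p := 2) 2
  norm_num at this ⊢
  exact this

lemma fourth_pow_1616 (y : ℤ_[2]) : ∃ x : ℤ_[2], x ^ 4 = 1 + 16 * y := by
  have h4y : ‖(4 : ℤ_[2]) * y‖ < 1 := by
    calc ‖(4 : ℤ_[2]) * y‖ = ‖(4:ℤ_[2])‖ * ‖y‖ := norm_mul _ _
    _ ≤ 1/4 * 1 := by rw [norm_four]; gcongr; exact PadicInt.norm_le_one y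
    _ < 1 := by norm_num
  have h14 : ‖(1 : ℤ_[2]) + 4 * y‖ = 1 := by
    rw [PadicInt.norm_add_eq_max_of_ne, norm_one, max_eq_left (le_of_lt (by simpa using h4y))]
    rw [norm_one]; exact fun h => absurd h.symm (ne_of_lt h4y)
  set F : Polynomial ℤ_[2] := X ^ 4 - C (1 + 16 * y) with hF
  set a : ℤ_[2] := 1 + 4 * y with haa
  have hev : F.eval a = 32 * (3*y^2 + 8*y^3 + 8*y^4) := by
    simp [hF, haa]; try ring
  have hdev : F.derivative.eval a = 4 * a^3 := by
    simp [hF]; norm_num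
  have hnorm : ‖F.eval a‖ < ‖F.derivative.eval a‖ ^ 2 := by
    rw [hev, hdev]
    have h32 : ‖(32 : ℤ_[2])‖ = 1/32 := by
      have : ((32 : ℤ_[2])) = (2 : ℤ_[2])^5 := by norm_num
      rw [this]
      have := PadicInt.norm_p_pow (p := 2) 5
      norm_num at this ⊢
      exact this
    have hL : ‖(32 : ℤ_[2]) * (3*y^2 + 8*y^3 + 8*y^4)‖ ≤ 1/32 := by
      rw [norm_mul, h32]
      nlinarith [PadicInt.norm_le_one (3*y^2 + 8*y^3 + 8*y^4), norm_nonneg ((3:ℤ_[2])*y^2 + 8*y^3 + 8*y^4)]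
    have hR : ‖(4 : ℤ_[2]) * a^3‖ ^ 2 = 1/16 := by
      rw [norm_mul, norm_four, norm_pow, h14]; norm_num
    rw [hR]; linarith
  obtain ⟨z, hz, -⟩ := hensels_lemma hnorm
  refine ⟨z, ?_⟩
  have : z ^ 4 - (1 + 16 * y) = 0 := by simpa [hF] using hz
  exact sub_eq_zero.mp this

lemma combo16 : ∀ S : Fin 8, ∀ t : Fin 4, ∀ s : Fin 2, ∃ i j k : Fin 2,
    (2*S.val + i.val*(2*(2*t.val+1)) + j.val*(4*(2*s.val+1)) + k.val*8) % 16 = 0 := by decide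

lemma exists_unit_part (z : ℚ_[2]) (hz : z ≠ 0) (n : ℕ) (hv : z.valuation = n) :
    ∃ W : ℤ_[2], IsUnit W ∧ (W : ℚ_[2]) * 2^n = z := by
  have hzn : ‖z‖ = (2:ℝ) ^ (-(n:ℤ)) := by
    rw [Padic.norm_eq_zpow_neg_valuation hz, hv]; norm_num
  have h2n : ‖(2:ℚ_[2])^n‖ = (2:ℝ) ^ (-(n:ℤ)) := by
    have := Padic.norm_p_pow (p := 2) n
    norm_num at this ⊢
    exact this
  have hne : (2:ℚ_[2])^n ≠ 0 := pow_ne_zero n two_ne_zero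
  have hw : ‖z / 2^n‖ = 1 := by
    rw [norm_div, hzn, h2n, div_self]
    positivity
  refine ⟨⟨z / 2^n, le_of_eq hw⟩, ?_, ?_⟩
  · refine PadicInt.isUnit_iff.mpr ?_
    exact hw
  · exact div_mul_cancel₀ z hne

lemma odd_of_unit16 (x : ZMod 16) (hx : IsUnit x) : x.val % 2 = 1 := by
  rw [← ZMod.natCast_zmod_val x, ZMod.isUnit_iff_coprime] at hx
  have hg : Nat.gcd x.val 16 = 1 := hx
  rcases Nat.even_or_odd x.val with h | h
  · exfalso
    obtain ⟨m, hm⟩ := h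
    have h2 : (2:ℕ) ∣ Nat.gcd x.val 16 := Nat.dvd_gcd ⟨m, by omega⟩ (by norm_num)
    rw [hg] at h2
    omega
  · obtain ⟨m, hm⟩ := h
    omega

/-- A diagonal dyadic quartic with coefficients of valuations 0, 1, 2, 3, 0 has a
nontrivial zero. -/
theorem diagonal_quartic_dyadic (a b c d e : ℚ_[2])
    (ha0 : a ≠ 0) (hb0 : b ≠ 0) (hc0 : c ≠ 0) (hd0 : d ≠ 0) (he0 : e ≠ 0)
    (ha : a.valuation = 0) (hb : b.valuation = 1) (hc : c.valuation = 2)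
    (hd : d.valuation = 3) (he : e.valuation = 0) :
    ∃ x₁ x₂ x₃ x₄ x₅ : ℚ_[2], ¬(x₁ = 0 ∧ x₂ = 0 ∧ x₃ = 0 ∧ x₄ = 0 ∧ x₅ = 0) ∧
      a * x₁ ^ 4 + b * x₂ ^ 4 + c * x₃ ^ 4 + d * x₄ ^ 4 + e * x₅ ^ 4 = 0 := by
  obtain ⟨A, hAu, hAe⟩ := exists_unit_part a ha0 0 (by exact_mod_cast ha)
  obtain ⟨B, hBu, hBe⟩ := exists_unit_part b hb0 1 (by exact_mod_cast hb)
  obtain ⟨C, hCu, hCe⟩ := exists_unit_part c hc0 2 (by exact_mod_cast hc)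
  obtain ⟨D, hDu, hDe⟩ := exists_unit_part d hd0 3 (by exact_mod_cast hd)
  obtain ⟨E, hEu, hEe⟩ := exists_unit_part e he0 0 (by exact_mod_cast he)
  set φ : ℤ_[2] →+* ZMod 16 := PadicInt.toZModPow 4 with hφ
  -- values mod 16
  have hA16 : (φ A).val % 2 = 1 := odd_of_unit16 _ (hAu.map φ)
  have hB16 : (φ B).val % 2 = 1 := odd_of_unit16 _ (hBu.map φ)
  have hC16 : (φ C).val % 2 = 1 := odd_of_unit16 _ (hCu.map φ)
  have hD16 : (φ D).val % 2 = 1 := odd_of_unit16 _ (hDu.map φ)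
  have hE16 : (φ E).val % 2 = 1 := odd_of_unit16 _ (hEu.map φ)
  have hAlt : (φ A).val < 16 := ZMod.val_lt _
  have hBlt : (φ B).val < 16 := ZMod.val_lt _
  have hClt : (φ C).val < 16 := ZMod.val_lt _
  have hDlt : (φ D).val < 16 := ZMod.val_lt _
  have hElt : (φ E).val < 16 := ZMod.val_lt _
  set av := (φ A).val
  set bv := (φ B).val
  set cv := (φ C).val
  set dv := (φ D).val
  set ev := (φ E).val
  obtain ⟨i, j, k, hijk⟩ := combo16 ⟨((av + ev)/2) % 8, by omega⟩ ⟨(bv/2) % 4, by omega⟩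
    ⟨(cv/2) % 2, by omega⟩
  simp only at hijk
  have hdvd : 16 ∣ av + i.val * (2 * bv) + j.val * (4 * cv) + k.val * (8 * dv) + ev := by
    fin_cases i <;> fin_cases j <;> fin_cases k <;> simp at hijk ⊢ <;> omega
  -- the element is divisible by 16 in ℤ_[2]
  set S : ℤ_[2] := A + (i.val : ℤ_[2]) * (2 * B) + (j.val : ℤ_[2]) * (4 * C)
      + (k.val : ℤ_[2]) * (8 * D) + E with hS
  have hφS : φ S = 0 := by
    have : φ S = ((av + i.val * (2 * bv) + j.val * (4 * cv) + k.val * (8 * dv) + ev : ℕ) :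
        ZMod 16) := by
      simp only [hS, map_add, map_mul, map_natCast, map_ofNat]
      push_cast
      rw [ZMod.natCast_zmod_val, ZMod.natCast_zmod_val, ZMod.natCast_zmod_val,
        ZMod.natCast_zmod_val, ZMod.natCast_zmod_val]
    rw [this, ZMod.natCast_eq_zero_iff]
    exact hdvd
  have hker : S ∈ RingHom.ker φ := hφS
  rw [hφ, PadicInt.ker_toZModPow, Ideal.mem_span_singleton] at hker
  obtain ⟨y, hy⟩ := hker
  have hy' : S = 16 * y := by rw [hy]; norm_num
  obtain ⟨v, hv⟩ := hEu.exists_right_inv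
  obtain ⟨x, hx4⟩ := fourth_pow_1616 (-(y * v))
  have hEx : E * x ^ 4 = E - 16 * y := by
    rw [hx4]; linear_combination (-(16 : ℤ_[2]) * y) * hv
  have hzero : A + (i.val : ℤ_[2]) * (2 * B) + (j.val : ℤ_[2]) * (4 * C)
      + (k.val : ℤ_[2]) * (8 * D) + E * x ^ 4 = 0 := by
    have := hy'
    rw [hS] at this
    linear_combination this + hEx
  have hzeroQ : (A : ℚ_[2]) + (i.val : ℚ_[2]) * (2 * B) + (j.val : ℚ_[2]) * (4 * C)
      + (k.val : ℚ_[2]) * (8 * D) + E * (x : ℚ_[2]) ^ 4 = 0 := by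
    have := congrArg (fun z : ℤ_[2] => (z : ℚ_[2])) hzero
    push_cast at this
    convert this using 2
    norm_cast
  refine ⟨1, (i.val : ℚ_[2]), (j.val : ℚ_[2]), (k.val : ℚ_[2]), (x : ℚ_[2]),
    fun h => one_ne_zero h.1, ?_⟩
  have hi4 : ((i.val : ℚ_[2])) ^ 4 = (i.val : ℚ_[2]) := by fin_cases i <;> norm_num
  have hj4 : ((j.val : ℚ_[2])) ^ 4 = (j.val : ℚ_[2]) := by fin_cases j <;> norm_num
  have hk4 : ((k.val : ℚ_[2])) ^ 4 = (k.val : ℚ_[2]) := by fin_cases k <;> norm_num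
  rw [hi4, hj4, hk4, ← hAe, ← hBe, ← hCe, ← hDe, ← hEe]
  linear_combination hzeroQ
end

section
/- Let a, b, c ∈ ℚ₃ be elements whose 3-adic valuations satisfy ν(a) = 0, ν(b) = 0 and ν(c) = 1. Then the diagonal cubic form a·x³ + b·y³ + c·z³ has a nontrivial zero over ℚ₃, i.e., there exist x, y, z ∈ ℚ₃, not all zero, with a·x³ + b·y³ + c·z³ = 0. -/
open Polynomial

/-- Every element of `1 + 9ℤ₃` is a cube (Hensel's lemma applied to
`3s³ + 3s² + s = m`, which produces `(1+3s)³ = 1 + 9m`). -/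
lemma cube_of_one_add_nine (m : ℤ_[3]) : ∃ t : ℤ_[3], t ^ 3 = 1 + 9 * m := by
  set F : Polynomial ℤ_[3] := C 3 * X ^ 3 + C 3 * X ^ 2 + X - C m with hF
  have hev : F.eval m = 3 * (m ^ 3 + m ^ 2) := by simp [hF]; ring
  have hder : F.derivative.eval m = 1 + 3 * (3 * m ^ 2 + 2 * m) := by
    simp [hF]; ring
  have h3 : ‖(3 : ℤ_[3])‖ = 3⁻¹ := by
    simpa using PadicInt.norm_p (p := 3)
  have hsmall : ∀ u : ℤ_[3], ‖(3 : ℤ_[3])‖ * ‖u‖ ≤ 3⁻¹ := by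
    intro u
    rw [h3]
    have := PadicInt.norm_le_one u
    nlinarith [norm_nonneg u]
  have hnd : ‖F.derivative.eval m‖ = 1 := by
    rw [hder, PadicInt.norm_add_eq_max_of_ne]
    · simp
      linarith [hsmall (3 * m ^ 2 + 2 * m)]
    · simp
      intro h
      have := hsmall (3 * m ^ 2 + 2 * m)
      rw [← h] at this
      norm_num at this
  have hnorm : ‖F.eval m‖ < ‖F.derivative.eval m‖ ^ 2 := by
    rw [hnd, hev, norm_mul]
    have := hsmall (m ^ 3 + m ^ 2)
    norm_num
    linarith
  obtain ⟨z, hz, -⟩ := hensels_lemma hnorm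
  refine ⟨1 + 3 * z, ?_⟩
  have hz' : 3 * z ^ 3 + 3 * z ^ 2 + z - m = 0 := by simpa [hF] using hz
  linear_combination 9 * hz'

/-- The mod-9 case analysis: if `β` is a unit mod 3 and `γ` is exactly
divisible by 3 in `ZMod 9`, then one of the six values `-β - γ·e` (for
`e ∈ {1, 0, -1}`) is `±1` mod 9. -/
lemma key_zmod : ∀ β γ : ZMod (3 ^ 2),
    (ZMod.castHom (pow_dvd_pow 3 one_le_two) (ZMod (3 ^ 1)) β ≠ 0) →
    (ZMod.castHom (pow_dvd_pow 3 one_le_two) (ZMod (3 ^ 1)) γ = 0) →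
    γ ≠ 0 →
    ((-β - γ = 1 ∨ -β - γ = -1) ∨ (-β = 1 ∨ -β = -1) ∨ (-β + γ = 1 ∨ -β + γ = -1)) := by
  decide

/-- If `-B - C·z₀³ ≡ ±1 (mod 9)` then the equation `x³ + B + C z³ = 0`
has a solution in `ℤ₃`. -/
lemma solve_of_mod (B C z₀ ε : ℤ_[3]) (hε : ε = 1 ∨ ε = -1)
    (h : PadicInt.toZModPow 2 (-B - C * z₀ ^ 3 - ε) = 0) :
    ∃ x z : ℤ_[3], x ^ 3 + B + C * z ^ 3 = 0 := by
  have hker : -B - C * z₀ ^ 3 - ε ∈ Ideal.span {((3 : ℕ) : ℤ_[3]) ^ 2} := by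
    rw [← PadicInt.ker_toZModPow 2]
    exact h
  rw [Ideal.mem_span_singleton] at hker
  norm_num at hker
  obtain ⟨m, hm⟩ := hker
  rcases hε with hε | hε
  · subst hε
    obtain ⟨t, ht⟩ := cube_of_one_add_nine m
    exact ⟨t, z₀, by linear_combination ht - hm⟩
  · subst hε
    obtain ⟨t, ht⟩ := cube_of_one_add_nine (-m)
    exact ⟨-t, z₀, by linear_combination -ht - hm⟩

/-- Core solvability over `ℤ₃`: if `B` is a unit and `ν(C) = 1` then
`x³ + B + C z³ = 0` is solvable. -/
lemma diagonal_core (B C : ℤ_[3]) (hB : ‖B‖ = 1) (hC : ‖C‖ = 3⁻¹) :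
    ∃ x z : ℤ_[3], x ^ 3 + B + C * z ^ 3 = 0 := by
  have hcast : ∀ x : ℤ_[3],
      ZMod.castHom (pow_dvd_pow 3 one_le_two) (ZMod (3 ^ 1)) (PadicInt.toZModPow 2 x)
        = PadicInt.toZModPow 1 x := by
    intro x
    exact RingHom.congr_fun (PadicInt.zmod_cast_comp_toZModPow (p := 3) 1 2 one_le_two) x
  have hmem : ∀ (x : ℤ_[3]) (n : ℕ),
      PadicInt.toZModPow n x = 0 ↔ ‖x‖ ≤ (3 : ℝ) ^ (-(n : ℤ)) := by
    intro x n
    rw [← RingHom.mem_ker, PadicInt.ker_toZModPow,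
      ← PadicInt.norm_le_pow_iff_mem_span_pow]
    norm_num
  have hB1 : PadicInt.toZModPow 1 B ≠ 0 := by
    rw [Ne, hmem]
    norm_num [hB]
  have hC1 : PadicInt.toZModPow 1 C = 0 := by
    rw [hmem]
    norm_num [hC]
  have hC2 : PadicInt.toZModPow 2 C ≠ 0 := by
    rw [Ne, hmem]
    norm_num [hC]
  have key := key_zmod (PadicInt.toZModPow 2 B) (PadicInt.toZModPow 2 C)
    (by rw [hcast]; exact hB1) (by rw [hcast]; exact hC1) hC2
  rcases key with (h | h) | (h | h) | (h | h)
  · exact solve_of_mod B C 1 1 (Or.inl rfl) (by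
      simp only [map_sub, map_neg, map_mul, map_pow, map_one, one_pow]
      linear_combination h)
  · exact solve_of_mod B C 1 (-1) (Or.inr rfl) (by
      simp only [map_sub, map_neg, map_mul, map_pow, map_one, one_pow]
      linear_combination h)
  · exact solve_of_mod B C 0 1 (Or.inl rfl) (by
      simp only [map_sub, map_neg, map_mul, map_pow, map_one, map_zero]
      linear_combination h)
  · exact solve_of_mod B C 0 (-1) (Or.inr rfl) (by
      simp only [map_sub, map_neg, map_mul, map_pow, map_one, map_zero]
      linear_combination h)
  · exact solve_of_mod B C (-1) 1 (Or.inl rfl) (by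
      simp only [map_sub, map_neg, map_mul, map_pow, map_one]
      linear_combination h)
  · exact solve_of_mod B C (-1) (-1) (Or.inr rfl) (by
      simp only [map_sub, map_neg, map_mul, map_pow, map_one]
      linear_combination h)

/-- A diagonal 3-adic cubic with coefficients of valuations 0, 0, 1 has a
nontrivial zero. -/
theorem diagonal_cubic_triadic (a b c : ℚ_[3])
    (ha0 : a ≠ 0) (hb0 : b ≠ 0) (hc0 : c ≠ 0)
    (ha : a.valuation = 0) (hb : b.valuation = 0) (hc : c.valuation = 1) :
    ∃ x y z : ℚ_[3], ¬(x = 0 ∧ y = 0 ∧ z = 0) ∧ a * x ^ 3 + b * y ^ 3 + c * z ^ 3 = 0 := by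
  have hna : ‖a‖ = 1 := by rw [Padic.norm_eq_zpow_neg_valuation ha0, ha]; norm_num
  have hnb : ‖b‖ = 1 := by rw [Padic.norm_eq_zpow_neg_valuation hb0, hb]; norm_num
  have hnc : ‖c‖ = 3⁻¹ := by rw [Padic.norm_eq_zpow_neg_valuation hc0, hc]; norm_num
  have hBn : ‖b / a‖ = 1 := by rw [norm_div, hna, hnb]; norm_num
  have hCn : ‖c / a‖ = 3⁻¹ := by rw [norm_div, hna, hnc]; norm_num
  set B : ℤ_[3] := ⟨b / a, by rw [hBn]⟩ with hBdef
  set C : ℤ_[3] := ⟨c / a, by rw [hCn]; norm_num⟩ with hCdef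
  have hB : ‖B‖ = 1 := hBn
  have hC : ‖C‖ = 3⁻¹ := hCn
  obtain ⟨x, z, hxz⟩ := diagonal_core B C hB hC
  refine ⟨(x : ℚ_[3]), 1, (z : ℚ_[3]), by simp, ?_⟩
  have h2 : ((x ^ 3 + B + C * z ^ 3 : ℤ_[3]) : ℚ_[3]) = 0 := by rw [hxz]; simp
  push_cast at h2
  rw [show (B : ℚ_[3]) = b / a from rfl, show (C : ℚ_[3]) = c / a from rfl] at h2
  field_simp at h2
  linear_combination h2
end
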